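/- arXiv:0807.2205 — 2 statements merged into one kernel-verified Lean document; each statement's English description precedes it below -/
import Mathlib

section
/- Suppose 𝒜ₙ ⊆ E^∞ for each n ∈ ℕ and ℬ = ⋃ₙ 𝒜ₙ. Let x⃗ be a finite block sequence and X a block subspace. Then there is a block subspace Z ⊆ X such that either (a) II has a strategy in G_Z to play sequences (zᵢ) ∈ E^∞ for which there exists n such that for every block subspace V ⊆ Z, I has no strategy in F_V(x⃗⌢(z₀,…,zₙ)) to play in ∼𝒜ₙ, or (b) I has a strategy in F_Z(x⃗) to play in ∼ℬ. -/
section Defs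

variable {𝔽 : Type} [Field 𝔽] {E : Type} [AddCommGroup E] [Module 𝔽 E]

/-- The support of a vector with respect to the basis `b`. -/
noncomputable def supp (b : Module.Basis ℕ 𝔽 E) (x : E) : Finset ℕ :=
  (b.repr x).support

/-- `VecLt b x y` means `x < y`: every element of the support of `x` is smaller than
every element of the support of `y`. -/
def VecLt (b : Module.Basis ℕ 𝔽 E) (x y : E) : Prop :=
  ∀ m ∈ supp b x, ∀ n ∈ supp b y, m < n

/-- `NatLt b k x` means `k < x`: `k` is smaller than every element of the support of `x`. -/
def NatLt (b : Module.Basis ℕ 𝔽 E) (k : ℕ) (x : E) : Prop :=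
  ∀ n ∈ supp b x, k < n

/-- An infinite block sequence: a sequence of nonzero vectors with `x n < x (n + 1)`. -/
def IsBlockSeq (b : Module.Basis ℕ 𝔽 E) (x : ℕ → E) : Prop :=
  (∀ n, x n ≠ 0) ∧ ∀ n, VecLt b (x n) (x (n + 1))

/-- A finite block sequence: a list of nonzero vectors, consecutively increasing in the
block ordering. -/
def IsFinBlockSeq (b : Module.Basis ℕ 𝔽 E) (l : List E) : Prop :=
  (∀ x ∈ l, x ≠ 0) ∧ l.Chain' (VecLt b)

/-- A block subspace: a subspace spanned by an infinite block sequence. -/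
def IsBlockSubspace (b : Module.Basis ℕ 𝔽 E) (X : Submodule 𝔽 E) : Prop :=
  ∃ y : ℕ → E, IsBlockSeq b y ∧ X = Submodule.span 𝔽 (Set.range y)

/-- The list of the first `n` values of a sequence. -/
def hist {α : Type _} (x : ℕ → α) (n : ℕ) : List α :=
  List.ofFn (fun j : Fin n => x j)

/-- The concatenation of a finite prefix with an infinite sequence. -/
def prefCat {α : Type _} (l : List α) (x : ℕ → α) : ℕ → α := fun n =>
  if h : n < l.length then l.get ⟨n, h⟩ else x (n - l.length)

/-- Player II has a strategy in Gowers' game `G_X(pre)` below `X` to play in `A`: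
player I plays infinite-dimensional subspaces `Y i ≤ X`, player II answers with a
nonzero vector of `Y i`, the vectors played by II forming a block sequence, and the
outcome (the prefix `pre` followed by II's vectors) lies in `A`. -/
def IIWinsG (b : Module.Basis ℕ 𝔽 E) (X : Submodule 𝔽 E) (pre : List E) (A : Set (ℕ → E)) :
    Prop :=
  ∃ σ : List (Submodule 𝔽 E) → E,
    ∀ Y : ℕ → Submodule 𝔽 E,
      (∀ i, Y i ≤ X ∧ ¬FiniteDimensional 𝔽 ↥(Y i)) →
      (∀ i, σ (hist Y (i + 1)) ∈ Y i ∧ σ (hist Y (i + 1)) ≠ 0 ∧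
          VecLt b (σ (hist Y (i + 1))) (σ (hist Y (i + 2)))) ∧
        prefCat pre (fun i => σ (hist Y (i + 1))) ∈ A

/-- Player I has a strategy in the infinite asymptotic game `F_X(pre)` below `X` to play
in `A`: player I plays strictly increasing natural numbers `n i`, player II answers with
nonzero vectors of `X` with `n i < x i` forming a block sequence, and the outcome
(the prefix `pre` followed by II's vectors) lies in `A`. -/
def IWinsF (b : Module.Basis ℕ 𝔽 E) (X : Submodule 𝔽 E) (pre : List E) (A : Set (ℕ → E)) :
    Prop :=
  ∃ σ : List E → ℕ,
    ∀ x : ℕ → E,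
      (∀ i, x i ∈ X ∧ x i ≠ 0 ∧ NatLt b (σ (hist x i)) (x i) ∧
          VecLt b (x i) (x (i + 1))) →
      (∀ i, σ (hist x i) < σ (hist x (i + 1))) ∧ prefCat pre x ∈ A

/-- A set `A ⊆ E^∞` is strategically Ramsey if for every block subspace `V` and every
finite block sequence `z`, there is a block subspace `W ≤ V` such that either II has a
strategy in `G_W(z)` to play in `A`, or I has a strategy in `F_W(z)` to play in `Aᶜ`. -/
def StrategicallyRamsey (b : Module.Basis ℕ 𝔽 E) (A : Set (ℕ → E)) : Prop :=
  ∀ V : Submodule 𝔽 E, IsBlockSubspace b V → ∀ z : List E, IsFinBlockSeq b z →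
    ∃ W : Submodule 𝔽 E, W ≤ V ∧ IsBlockSubspace b W ∧
      (IIWinsG b W z A ∨ IWinsF b W z Aᶜ)

end Defs


noncomputable section Part1
open Classical Submodule Set

variable {𝔽 : Type} [Field 𝔽] {E : Type} [AddCommGroup E] [Module 𝔽 E] (b : Module.Basis ℕ 𝔽 E)

/-- max of support -/
def msup (x : E) : ℕ := (supp b x).sup id

lemma le_msup {x : E} {a : ℕ} (ha : a ∈ supp b x) : a ≤ msup b x := Finset.le_sup (f := id) ha

lemma supp_nonempty {x : E} (hx : x ≠ 0) : (supp b x).Nonempty := by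
  rw [Finset.nonempty_iff_ne_empty]
  intro h
  apply hx
  have : b.repr x = 0 := by
    ext m; by_contra hm
    have : m ∈ supp b x := Finsupp.mem_support_iff.2 hm
    simp [h] at this
  simpa using congrArg b.repr.symm this

lemma vecLt_of_natLt_msup {u y : E} (h : NatLt b (msup b u) y) : VecLt b u y := by
  intro m hm n hn
  exact lt_of_le_of_lt (le_msup b hm) (h n hn)

lemma natLt_mono {b : Module.Basis ℕ 𝔽 E} {m n : ℕ} {x : E} (hmn : m ≤ n) (h : NatLt b n x) :
    NatLt b m x := by
  intro a ha; exact lt_of_le_of_lt hmn (h a ha)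

/-- Subspace of vectors with support above N. -/
def EN (N : ℕ) : Submodule 𝔽 E where
  carrier := {x | ∀ m ∈ supp b x, N < m}
  add_mem' := by
    intro x y hx hy m hm
    have : m ∈ supp b x ∪ supp b y := by
      have h1 : b.repr (x + y) = b.repr x + b.repr y := map_add _ _ _
      have := Finsupp.support_add (g₁ := b.repr x) (g₂ := b.repr y)
      unfold supp at hm ⊢
      rw [h1] at hm
      exact this hm
    rcases Finset.mem_union.1 this with h | h
    · exact hx m h
    · exact hy m h
  zero_mem' := by intro m hm; unfold supp at hm; simp at hm
  smul_mem' := by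
    intro c x hx m hm
    apply hx
    unfold supp at hm ⊢
    rw [map_smul] at hm
    exact Finsupp.support_smul hm

lemma mem_EN {b : Module.Basis ℕ 𝔽 E} {N : ℕ} {x : E} : x ∈ EN b N ↔ NatLt b N x := Iff.rfl

/-- `Tall U`: contains nonzero vectors of arbitrarily high support. -/
def Tall (U : Submodule 𝔽 E) : Prop := ∀ N, ∃ y, y ∈ U ∧ y ≠ 0 ∧ NatLt b N y

lemma tall_inf_EN {b : Module.Basis ℕ 𝔽 E} {U : Submodule 𝔽 E} (h : Tall b U) (N : ℕ) :
    Tall b (U ⊓ EN b N) := by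
  intro M
  obtain ⟨y, hyU, hy0, hys⟩ := h (max N M)
  exact ⟨y, ⟨hyU, fun m hm => lt_of_le_of_lt (le_max_left _ _) (hys m hm)⟩, hy0,
    fun m hm => lt_of_le_of_lt (le_max_right _ _) (hys m hm)⟩

lemma tall_of_infdim {b : Module.Basis ℕ 𝔽 E} {U : Submodule 𝔽 E} (h : ¬FiniteDimensional 𝔽 U) :
    Tall b U := by
  intro N
  set φ : U →ₗ[𝔽] (Fin (N+1) → 𝔽) :=
    { toFun := fun u => fun i => b.repr u.1 i.1
      map_add' := by intro u v; ext i; simp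
      map_smul' := by intro c u; ext i; simp }
  have hker : LinearMap.ker φ ≠ ⊥ := by
    intro hk
    apply h
    have hinj : Function.Injective φ := LinearMap.ker_eq_bot.1 hk
    exact FiniteDimensional.of_injective φ hinj
  obtain ⟨u, hu, hu0⟩ := Submodule.exists_mem_ne_zero_of_ne_bot hker
  refine ⟨u.1, u.2, ?_, ?_⟩
  · intro h0
    apply hu0
    exact Subtype.ext h0
  · intro m hm
    by_contra hNm
    push_neg at hNm
    have : φ u ⟨m, Nat.lt_succ_of_le hNm⟩ = 0 := by rw [hu]; rfl
    have hm' : b.repr u.1 m ≠ 0 := Finsupp.mem_support_iff.1 hm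
    exact hm' this

/-- supports of a block sequence are increasingly ordered -/
lemma blockPairwise {v : ℕ → E} (hv : IsBlockSeq b v) :
    ∀ i k, ∀ a ∈ supp b (v i), ∀ c ∈ supp b (v (i + k + 1)), a < c := by
  intro i k
  induction k with
  | zero => exact fun a ha c hc => hv.2 i a ha c hc
  | succ k ih =>
    intro a ha c hc
    obtain ⟨m, hm⟩ := supp_nonempty b (hv.1 (i + k + 1))
    exact lt_trans (ih a ha m hm) (hv.2 (i + k + 1) m hm c hc)

lemma blockPairwise' {v : ℕ → E} (hv : IsBlockSeq b v) {i j : ℕ} (hij : i < j) :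
    ∀ a ∈ supp b (v i), ∀ c ∈ supp b (v j), a < c := by
  obtain ⟨k, rfl⟩ : ∃ k, j = i + k + 1 := ⟨j - i - 1, by omega⟩
  exact blockPairwise b hv i _

lemma supp_disjoint {v : ℕ → E} (hv : IsBlockSeq b v) {i j : ℕ} (hij : i ≠ j) {m : ℕ}
    (hi : m ∈ supp b (v i)) (hj : m ∈ supp b (v j)) : False := by
  rcases lt_or_gt_of_ne hij with h | h
  · exact lt_irrefl m (blockPairwise' b hv h m hi m hj)
  · exact lt_irrefl m (blockPairwise' b hv h m hj m hi)

/-- KEY: an element of the span of a block sequence with high support lies in the span of the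
high-support members of the sequence. -/
lemma key_support {v : ℕ → E} (hv : IsBlockSeq b v) {x : E} {N : ℕ}
    (hx : x ∈ Submodule.span 𝔽 (Set.range v)) (hs : NatLt b N x) :
    x ∈ Submodule.span 𝔽 (v '' {j | NatLt b N (v j)}) := by
  obtain ⟨c, hc⟩ := (Finsupp.mem_span_range_iff_exists_finsupp).1 hx
  have hsub : ∀ j ∈ c.support, ∀ m ∈ supp b (v j), m ∈ supp b x := by
    intro j hj m hm
    have hrepr : b.repr x = c.sum fun i r => r • b.repr (v i) := by
      rw [← hc]; rw [map_finsuppSum]; simp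
    have : b.repr x m = c j * b.repr (v j) m := by
      rw [hrepr]
      rw [Finsupp.sum]
      rw [Finset.sum_apply']
      rw [Finset.sum_eq_single j]
      · simp
      · intro i hi hij
        have : m ∉ supp b (v i) := fun hmi => supp_disjoint b hv hij hmi hm
        have : b.repr (v i) m = 0 := by
          by_contra hne
          exact this (Finsupp.mem_support_iff.2 hne)
        simp [this]
      · intro hj'; exact absurd hj hj'
    apply Finsupp.mem_support_iff.2
    rw [this]
    exact mul_ne_zero (Finsupp.mem_support_iff.1 hj) (Finsupp.mem_support_iff.1 hm)
  rw [← hc]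
  rw [Finsupp.sum]
  apply Submodule.sum_mem
  intro j hj
  apply Submodule.smul_mem
  apply Submodule.subset_span
  exact ⟨j, fun m hm => hs m (hsub j hj m hm), rfl⟩

end Part1

noncomputable section Part2
open Classical Submodule Set
variable {𝔽 : Type} [Field 𝔽] {E : Type} [AddCommGroup E] [Module 𝔽 E] (b : Module.Basis ℕ 𝔽 E)

/-- Bundled block sequence. -/
structure BS (b : Module.Basis ℕ 𝔽 E) where
  seq : ℕ → E
  blk : IsBlockSeq b seq

def BS.spn (W : BS b) : Submodule 𝔽 E := Submodule.span 𝔽 (Set.range W.seq)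

lemma BS.seq_mem {b : Module.Basis ℕ 𝔽 E} (W : BS b) (i : ℕ) : W.seq i ∈ W.spn :=
  Submodule.subset_span ⟨i, rfl⟩

/-- All support elements of the `j`-th member of a block sequence are `≥ j`. -/
lemma bs_supp_ge {b : Module.Basis ℕ 𝔽 E} {v : ℕ → E} (hv : IsBlockSeq b v) :
    ∀ j, ∀ a ∈ supp b (v j), j ≤ a := by
  intro j
  induction j with
  | zero => intro a _; exact Nat.zero_le a
  | succ j ih =>
    intro a ha
    obtain ⟨m, hm⟩ := supp_nonempty b (hv.1 j)
    have h1 := ih m hm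
    have h2 := hv.2 j m hm a ha
    omega

lemma bs_natLt_of_ge {b : Module.Basis ℕ 𝔽 E} {v : ℕ → E} (hv : IsBlockSeq b v) {N j : ℕ} (hj : N < j) :
    NatLt b N (v j) := fun a ha => lt_of_lt_of_le hj (bs_supp_ge hv j a ha)

/-- Every tall subspace contains a block sequence. -/
lemma bs_in_tall {b : Module.Basis ℕ 𝔽 E} {U : Submodule 𝔽 E} (h : Tall b U) :
    ∃ W : BS b, W.spn ≤ U := by
  let f : ℕ → E := Nat.rec (h 0).choose (fun _ prev => (h (msup b prev)).choose)
  have hf0 : f 0 ∈ U ∧ f 0 ≠ 0 ∧ NatLt b 0 (f 0) := (h 0).choose_spec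
  have hfs : ∀ k, f (k+1) ∈ U ∧ f (k+1) ≠ 0 ∧ NatLt b (msup b (f k)) (f (k+1)) :=
    fun k => (h (msup b (f k))).choose_spec
  have hmem : ∀ k, f k ∈ U := by
    intro k; cases k with
    | zero => exact hf0.1
    | succ k => exact (hfs k).1
  have hne : ∀ k, f k ≠ 0 := by
    intro k; cases k with
    | zero => exact hf0.2.1
    | succ k => exact (hfs k).2.1
  refine ⟨⟨f, hne, fun k => vecLt_of_natLt_msup b (hfs k).2.2⟩, ?_⟩
  rw [BS.spn, Submodule.span_le]
  rintro x ⟨k, rfl⟩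
  exact hmem k

/-- Dropping to a tail with support above `N`. -/
lemma bs_tail {b : Module.Basis ℕ 𝔽 E} (W : BS b) (N : ℕ) :
    ∃ W' : BS b, W'.spn ≤ W.spn ∧ ∀ i, NatLt b N (W'.seq i) := by
  refine ⟨⟨fun i => W.seq (N + 1 + i), fun i => W.blk.1 _, fun i => ?_⟩, ?_, fun i => ?_⟩
  · show VecLt b (W.seq (N + 1 + i)) (W.seq (N + 1 + (i + 1)))
    have h : N + 1 + (i + 1) = (N + 1 + i) + 1 := by omega
    rw [h]
    exact W.blk.2 (N + 1 + i)
  · rw [BS.spn, Submodule.span_le]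
    rintro x ⟨k, rfl⟩
    exact W.seq_mem _
  · exact bs_natLt_of_ge W.blk (by omega)

/-- The diagonal sequence of a fusion. -/
def fuseSeq (V : ℕ → BS b) : ℕ → E :=
  Nat.rec ((V 0).seq 0) (fun k prev => (V (k+1)).seq (msup b prev + 1))

lemma fuseSeq_succ {b : Module.Basis ℕ 𝔽 E} (V : ℕ → BS b) (k : ℕ) :
    fuseSeq b V (k+1) = (V (k+1)).seq (msup b (fuseSeq b V k) + 1) := rfl

lemma fuseSeq_natLt {b : Module.Basis ℕ 𝔽 E} (V : ℕ → BS b) (k : ℕ) :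
    NatLt b (msup b (fuseSeq b V k)) (fuseSeq b V (k+1)) := by
  rw [fuseSeq_succ]
  exact bs_natLt_of_ge (V (k+1)).blk (by omega)

lemma fuseSeq_blk {b : Module.Basis ℕ 𝔽 E} (V : ℕ → BS b) : IsBlockSeq b (fuseSeq b V) := by
  constructor
  · intro k; cases k with
    | zero => exact (V 0).blk.1 0
    | succ k => rw [fuseSeq_succ]; exact (V (k+1)).blk.1 _
  · intro k; exact vecLt_of_natLt_msup b (fuseSeq_natLt V k)

lemma fuseSeq_mem {b : Module.Basis ℕ 𝔽 E} (V : ℕ → BS b) (k : ℕ) : fuseSeq b V k ∈ (V k).spn := by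
  cases k with
  | zero => exact (V 0).seq_mem 0
  | succ k => rw [fuseSeq_succ]; exact (V (k+1)).seq_mem _

lemma fuseSeq_span_le {b : Module.Basis ℕ 𝔽 E} (V : ℕ → BS b)
    (hdesc : ∀ k, (V (k+1)).spn ≤ (V k).spn) :
    Submodule.span 𝔽 (Set.range (fuseSeq b V)) ≤ (V 0).spn := by
  have hle : ∀ k l, k ≤ l → (V l).spn ≤ (V k).spn := by
    intro k l hkl
    induction l with
    | zero => have : k = 0 := Nat.le_zero.1 hkl; subst this; exact le_refl _
    | succ l ih =>
      rcases Nat.lt_or_ge k (l+1) with h | h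
      · exact le_trans (hdesc l) (ih (by omega))
      · have : k = l + 1 := by omega
        subst this; exact le_refl _
  rw [Submodule.span_le]
  rintro x ⟨k, rfl⟩
  exact hle 0 k (Nat.zero_le _) (fuseSeq_mem V k)

/-- TAIL property of the fusion diagonal. -/
lemma fuseSeq_tail {b : Module.Basis ℕ 𝔽 E} (V : ℕ → BS b)
    (hdesc : ∀ k, (V (k+1)).spn ≤ (V k).spn) {x : E} {k : ℕ}
    (hx : x ∈ Submodule.span 𝔽 (Set.range (fuseSeq b V)))
    (hs : NatLt b (msup b (fuseSeq b V k)) x) : x ∈ (V (k+1)).spn := by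
  have hle : ∀ k l, k ≤ l → (V l).spn ≤ (V k).spn := by
    intro k l hkl
    induction l with
    | zero => have : k = 0 := Nat.le_zero.1 hkl; subst this; exact le_refl _
    | succ l ih =>
      rcases Nat.lt_or_ge k (l+1) with h | h
      · exact le_trans (hdesc l) (ih (by omega))
      · have : k = l + 1 := by omega
        subst this; exact le_refl _
  set s := fuseSeq b V with hsdef
  have hblk := fuseSeq_blk V
  have := key_support b hblk hx hs
  have himg : Submodule.span 𝔽 (s '' {j | NatLt b (msup b (s k)) (s j)}) ≤ (V (k+1)).spn := by
    rw [Submodule.span_le]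
    rintro y ⟨j, hj, rfl⟩
    have hjk : k + 1 ≤ j := by
      by_contra hc
      push_neg at hc
      obtain ⟨a, ha⟩ := supp_nonempty b (hblk.1 j)
      have h1 : msup b (s k) < a := hj a ha
      have h2 : a ≤ msup b (s k) := by
        rcases Nat.lt_or_ge j k with h | h
        · obtain ⟨c, hcs⟩ := supp_nonempty b (hblk.1 k)
          have := blockPairwise' b hblk h a ha c hcs
          exact le_trans (le_of_lt this) (le_msup b hcs)
        · have : j = k := by omega
          subst this; exact le_msup b ha
      omega
    exact hle (k+1) j hjk (fuseSeq_mem V j)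
  exact himg this

end Part2

noncomputable section Part3
open Classical Submodule Set
variable {𝔽 : Type} [Field 𝔽] {E : Type} [AddCommGroup E] [Module 𝔽 E] (b : Module.Basis ℕ 𝔽 E)

/-! ### hist and prefCat lemmas -/

lemma hist_zero {α : Type _} (x : ℕ → α) : hist x 0 = [] := rfl

@[simp] lemma length_hist {α : Type _} (x : ℕ → α) (n : ℕ) : (hist x n).length = n := by
  simp [hist]

lemma hist_succ {α : Type _} (x : ℕ → α) (n : ℕ) :
    hist x (n+1) = hist x n ++ [x n] := by
  rw [hist, List.ofFn_succ', List.concat_eq_append]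
  congr

lemma hist_cons {α : Type _} (x : ℕ → α) (n : ℕ) :
    hist x (n+1) = x 0 :: hist (fun i => x (i+1)) n := by
  simp [hist, List.ofFn_succ]

lemma hist_congr {α : Type _} {x y : ℕ → α} (n : ℕ) (h : ∀ i, x i = y i) :
    hist x n = hist y n := by
  unfold hist; congr 1; funext j; exact h j

lemma getLast?_hist {α : Type _} (x : ℕ → α) (n : ℕ) :
    (hist x (n+1)).getLast? = some (x n) := by
  rw [hist_succ]
  simp

lemma hist_getElem {α : Type _} (x : ℕ → α) (n i : ℕ) (h : i < (hist x n).length) :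
    (hist x n)[i] = x i := by
  simp [hist]

lemma take_hist {α : Type _} (x : ℕ → α) {m n : ℕ} (h : m ≤ n) :
    (hist x n).take m = hist x m := by
  apply List.ext_getElem
  · simp [h]
  · intro i h1 h2
    simp only [List.getElem_take]
    rw [hist_getElem, hist_getElem]

lemma drop_hist {α : Type _} (x : ℕ → α) (m k : ℕ) :
    (hist x (m + k)).drop m = hist (fun i => x (i + m)) k := by
  apply List.ext_getElem
  · simp
  · intro i h1 h2
    rw [List.getElem_drop]
    rw [hist_getElem, hist_getElem]
    congr 1
    omega

lemma prefCat_nil {α : Type _} (x : ℕ → α) : prefCat [] x = x := by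
  funext n
  simp [prefCat]

lemma hist_ne_nil {α : Type _} (x : ℕ → α) (n : ℕ) : hist x (n+1) ≠ [] := by
  intro h
  have := congrArg List.length h
  simp at this

lemma prefCat_shift {α : Type _} (p : List α) (x : ℕ → α) (m : ℕ) :
    prefCat (p ++ hist x m) (fun i => x (i + m)) = prefCat p x := by
  funext n
  simp only [prefCat, List.length_append, length_hist]
  by_cases h1 : n < p.length
  · rw [dif_pos (by omega), dif_pos h1]
    simp only [List.get_eq_getElem]
    rw [List.getElem_append_left h1]
  · by_cases h2 : n < p.length + m
    · rw [dif_pos h2, dif_neg h1]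
      simp only [List.get_eq_getElem]
      rw [List.getElem_append_right (by omega)]
      rw [hist_getElem]
    · rw [dif_neg h2, dif_neg h1]
      congr 1
      omega

/-! ### The acceptance predicate -/

/-- `y` extends the finite block sequence `t`. -/
def chainOK (t : List E) (y : E) : Prop := ∀ v, t.getLast? = some v → VecLt b v y

lemma chainOK_nil {b : Module.Basis ℕ 𝔽 E} (y : E) : chainOK b [] y := by intro v hv; simp at hv

def AccClause (Dp : List E → Prop) (V : Submodule 𝔽 E) (P : ℕ → List E → Prop)
    (n : ℕ) (t : List E) : Prop :=
  Dp t ∨ ∀ U : Submodule 𝔽 E, U ≤ V → Tall b U →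
    ∃ y, y ∈ U ∧ y ≠ 0 ∧ NatLt b n y ∧ chainOK b t y ∧ ∃ n', P n' (t ++ [y])

def AccClosed (Dp : List E → Prop) (V : Submodule 𝔽 E) (P : ℕ → List E → Prop) : Prop :=
  ∀ n t, AccClause b Dp V P n t → P n t

def AccP (Dp : List E → Prop) (V : Submodule 𝔽 E) (n : ℕ) (t : List E) : Prop :=
  ∀ P, AccClosed b Dp V P → P n t

lemma accClause_mono {Dp V} {P Q : ℕ → List E → Prop} (h : ∀ n t, P n t → Q n t)
    {n t} (hc : AccClause b Dp V P n t) : AccClause b Dp V Q n t := by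
  rcases hc with hD | hcl
  · exact Or.inl hD
  · refine Or.inr fun U hU hT => ?_
    obtain ⟨y, h1, h2, h3, h4, n', h5⟩ := hcl U hU hT
    exact ⟨y, h1, h2, h3, h4, n', h n' _ h5⟩

lemma acc_intro {Dp V n t} (h : AccClause b Dp V (AccP b Dp V) n t) : AccP b Dp V n t := by
  intro P hP
  exact hP n t (accClause_mono b (fun n' t' ha => ha P hP) h)

lemma acc_base {b : Module.Basis ℕ 𝔽 E} {Dp V n t} (h : Dp t) : AccP b Dp V n t :=
  acc_intro b (Or.inl h)

lemma acc_dest {Dp V n t} (h : AccP b Dp V n t) : AccClause b Dp V (AccP b Dp V) n t := by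
  refine h (AccClause b Dp V (AccP b Dp V)) ?_
  intro n' t' h'
  exact accClause_mono b (fun n'' t'' hc => acc_intro b hc) h'

lemma acc_antimono {b : Module.Basis ℕ 𝔽 E} {Dp} {V V' : Submodule 𝔽 E} (hV : V' ≤ V) {n t}
    (h : AccP b Dp V n t) : AccP b Dp V' n t := by
  refine h (fun n t => AccP b Dp V' n t) ?_
  intro n' t' h'
  apply acc_intro b
  rcases h' with hD | hcl
  · exact Or.inl hD
  · exact Or.inr fun U hU hT => hcl U (le_trans hU hV) hT

lemma acc_germ {b : Module.Basis ℕ 𝔽 E} {Dp} {V : Submodule 𝔽 E} (N : ℕ) {n t}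
    (h : AccP b Dp (V ⊓ EN b N) n t) : AccP b Dp V (max n N) t := by
  refine h (fun n t => AccP b Dp V (max n N) t) ?_
  intro n' t' h'
  apply acc_intro b
  rcases h' with hD | hcl
  · exact Or.inl hD
  · refine Or.inr fun U hU hT => ?_
    obtain ⟨y, h1, h2, h3, h4, n'', h5⟩ :=
      hcl (U ⊓ EN b N) (inf_le_inf_right _ hU) (tall_inf_EN hT N)
    refine ⟨y, (Submodule.mem_inf.1 h1).1, h2, ?_, h4, max n'' N, h5⟩
    intro m hm
    have hN : NatLt b N y := mem_EN.1 (Submodule.mem_inf.1 h1).2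
    exact max_lt (h3 m hm) (hN m hm)

/-- negation unfolding -/
lemma acc_neg_unfold {b : Module.Basis ℕ 𝔽 E} {Dp} {V : Submodule 𝔽 E} {n t} (h : ¬ AccP b Dp V n t) :
    ¬ Dp t ∧ ∃ U : Submodule 𝔽 E, U ≤ V ∧ Tall b U ∧
      ∀ y, y ∈ U → y ≠ 0 → NatLt b n y → chainOK b t y → ∀ n', ¬ AccP b Dp V n' (t ++ [y]) := by
  by_contra hc
  apply h
  apply acc_intro b
  push_neg at hc
  rcases Classical.em (Dp t) with hD | hD
  · exact Or.inl hD
  · refine Or.inr fun U hU hT => ?_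
    have := hc hD U hU hT
    obtain ⟨y, h1, h2, h3, h4, n', h5⟩ := this
    exact ⟨y, h1, h2, h3, h4, n', h5⟩

/-! ### The win-transfer for player II -/

/-- II can win Gowers' game below `Z` from position `t`, hitting `Dp`. -/
def WinG (Dp : List E → Prop) (Z : Submodule 𝔽 E) (t : List E) : Prop :=
  ∃ σ : List (Submodule 𝔽 E) → E,
    ∀ Y : ℕ → Submodule 𝔽 E,
      (∀ i, Y i ≤ Z ∧ ¬FiniteDimensional 𝔽 ↥(Y i)) →
      (∀ i, σ (hist Y (i + 1)) ∈ Y i ∧ σ (hist Y (i + 1)) ≠ 0) ∧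
      chainOK b t (σ (hist Y 1)) ∧
      (∀ i, VecLt b (σ (hist Y (i + 1))) (σ (hist Y (i + 2)))) ∧
      (∃ j, Dp (t ++ hist (fun i => σ (hist Y (i + 1))) j))

/-- a vector of `U` with support above `N` (junk if `U` is not tall). -/
def pickT (U : Submodule 𝔽 E) (N : ℕ) : E :=
  if h : Tall b U then (h N).choose else 0

lemma pickT_spec {U : Submodule 𝔽 E} (h : Tall b U) (N : ℕ) :
    pickT b U N ∈ U ∧ pickT b U N ≠ 0 ∧ NatLt b N (pickT b U N) := by
  rw [pickT, dif_pos h]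
  exact (h N).choose_spec

/-- run of the "free" strategy: returns (output for last move, next bound) -/
def freeRun : List (Submodule 𝔽 E) → ℕ → E × ℕ
  | [], B => (0, B)
  | U :: rest, B =>
    if rest.isEmpty then (pickT b U B, msup b (pickT b U B))
    else freeRun rest (msup b (pickT b U B))

lemma freeRun_append (l : List (Submodule 𝔽 E)) (U : Submodule 𝔽 E) (B : ℕ) :
    freeRun b (l ++ [U]) B =
      (pickT b U (freeRun b l B).2, msup b (pickT b U (freeRun b l B).2)) := by
  induction l generalizing B with
  | nil => simp [freeRun]
  | cons U' l' ih =>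
    have hne : ¬ (l' ++ [U]).isEmpty := by simp
    rw [List.cons_append, freeRun]
    rw [if_neg hne]
    rw [ih]
    congr 1 <;> (congr 1) <;> (rw [freeRun]; cases l' with
      | nil => simp [freeRun]
      | cons a l'' => simp [freeRun])

def sigFree (B0 : ℕ) : List (Submodule 𝔽 E) → E := fun l => (freeRun b l B0).1

/-- base of the bound for continuing after position t -/
def chainBound (t : List E) : ℕ :=
  match t.getLast? with
  | some v => msup b v
  | none => 0

lemma win_base {Dp : List E → Prop} {Z : Submodule 𝔽 E} {t : List E} (h : Dp t) :
    WinG b Dp Z t := by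
  refine ⟨sigFree b (chainBound b t), ?_⟩
  intro Y hY
  have hT : ∀ i, Tall b (Y i) := fun i => tall_of_infdim (hY i).2
  -- the run values
  set out : ℕ → E := fun i => sigFree b (chainBound b t) (hist Y (i+1)) with hout
  have hrun : ∀ i, freeRun b (hist Y (i+1)) (chainBound b t) =
      (pickT b (Y i) ((freeRun b (hist Y i) (chainBound b t)).2),
       msup b (pickT b (Y i) ((freeRun b (hist Y i) (chainBound b t)).2))) := by
    intro i
    rw [hist_succ, freeRun_append]
  have hout_eq : ∀ i, out i = pickT b (Y i) ((freeRun b (hist Y i) (chainBound b t)).2) := by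
    intro i
    rw [hout]
    simp only [sigFree]
    rw [hrun i]
  have hbnd : ∀ i, (freeRun b (hist Y (i+1)) (chainBound b t)).2 = msup b (out i) := by
    intro i
    rw [hrun i, hout_eq i]
  have hspec : ∀ i, out i ∈ Y i ∧ out i ≠ 0 ∧
      NatLt b ((freeRun b (hist Y i) (chainBound b t)).2) (out i) := by
    intro i
    rw [hout_eq i]
    exact pickT_spec b (hT i) _
  refine ⟨fun i => ⟨(hspec i).1, (hspec i).2.1⟩, ?_, ?_, 0, by simp [hist]; exact h⟩
  · intro v hv
    apply vecLt_of_natLt_msup (b := b)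
    have := (hspec 0).2.2
    have h0 : (freeRun b (hist Y 0) (chainBound b t)).2 = chainBound b t := rfl
    rw [h0] at this
    have : NatLt b (chainBound b t) (out 0) := this
    unfold chainBound at this
    rw [hv] at this
    exact this
  · intro i
    apply vecLt_of_natLt_msup (b := b)
    have := (hspec (i+1)).2.2
    rwa [hbnd i] at this

/-- gluing step: the set of winning positions is Acc-closed. -/
lemma win_closed (Dp : List E → Prop) (Z : Submodule 𝔽 E) :
    AccClosed b Dp Z (fun _ t => WinG b Dp Z t) := by
  intro n t h
  rcases h with hD | hcl
  · exact win_base b hD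
  -- choices
  have hP : ∀ U : Submodule 𝔽 E, U ≤ Z → Tall b U →
      ∃ y, y ∈ U ∧ y ≠ 0 ∧ NatLt b n y ∧ chainOK b t y ∧ WinG b Dp Z (t ++ [y]) := by
    intro U h1 h2
    obtain ⟨y, a1, a2, a3, a4, _, a5⟩ := hcl U h1 h2
    exact ⟨y, a1, a2, a3, a4, a5⟩
  classical
  set cy : Submodule 𝔽 E → E := fun U =>
    if h : U ≤ Z ∧ Tall b U then (hP U h.1 h.2).choose else 0 with hcy
  have cy_spec : ∀ U (h : U ≤ Z ∧ Tall b U),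
      cy U ∈ U ∧ cy U ≠ 0 ∧ NatLt b n (cy U) ∧ chainOK b t (cy U) ∧
        WinG b Dp Z (t ++ [cy U]) := by
    intro U h
    rw [hcy]
    simp only [dif_pos h]
    exact (hP U h.1 h.2).choose_spec
  set cσ : Submodule 𝔽 E → List (Submodule 𝔽 E) → E := fun U =>
    if h : U ≤ Z ∧ Tall b U then (cy_spec U h).2.2.2.2.choose else fun _ => 0 with hcσ
  have cσ_spec : ∀ U (h : U ≤ Z ∧ Tall b U),
      ∀ Y : ℕ → Submodule 𝔽 E,
      (∀ i, Y i ≤ Z ∧ ¬FiniteDimensional 𝔽 ↥(Y i)) →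
      (∀ i, cσ U (hist Y (i + 1)) ∈ Y i ∧ cσ U (hist Y (i + 1)) ≠ 0) ∧
      chainOK b (t ++ [cy U]) (cσ U (hist Y 1)) ∧
      (∀ i, VecLt b (cσ U (hist Y (i + 1))) (cσ U (hist Y (i + 2)))) ∧
      (∃ j, Dp ((t ++ [cy U]) ++ hist (fun i => cσ U (hist Y (i + 1))) j)) := by
    intro U h
    have : cσ U = (cy_spec U h).2.2.2.2.choose := by rw [hcσ]; simp only [dif_pos h]
    rw [this]
    exact (cy_spec U h).2.2.2.2.choose_spec
  refine ⟨fun l => match l with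
    | [] => 0
    | U :: rest => if rest.isEmpty then cy U else cσ U rest, ?_⟩
  intro Y hY
  set σ : List (Submodule 𝔽 E) → E := fun l => match l with
    | [] => 0
    | U :: rest => if rest.isEmpty then cy U else cσ U rest with hσ
  show (∀ i, σ (hist Y (i + 1)) ∈ Y i ∧ σ (hist Y (i + 1)) ≠ 0) ∧
      chainOK b t (σ (hist Y 1)) ∧
      (∀ i, VecLt b (σ (hist Y (i + 1))) (σ (hist Y (i + 2)))) ∧
      (∃ j, Dp (t ++ hist (fun i => σ (hist Y (i + 1))) j))
  have hP0 : Y 0 ≤ Z ∧ Tall b (Y 0) := ⟨(hY 0).1, tall_of_infdim (hY 0).2⟩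
  set Y' : ℕ → Submodule 𝔽 E := fun i => Y (i+1) with hY'
  have hY'leg : ∀ i, Y' i ≤ Z ∧ ¬FiniteDimensional 𝔽 ↥(Y' i) := fun i => hY (i+1)
  have hspec := cσ_spec (Y 0) hP0 Y' hY'leg
  -- computations of σ on histories
  have hout0 : σ (hist Y 1) = cy (Y 0) := by
    rw [hist_cons]
    show (if (hist (fun i => Y (i+1)) 0).isEmpty then cy (Y 0)
      else cσ (Y 0) (hist (fun i => Y (i+1)) 0)) = cy (Y 0)
    simp [hist]
  have houts : ∀ k, σ (hist Y (k + 2)) = cσ (Y 0) (hist Y' (k + 1)) := by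
    intro k
    rw [hist_cons]
    show (if (hist (fun i => Y (i+1)) (k+1)).isEmpty then cy (Y 0)
      else cσ (Y 0) (hist (fun i => Y (i+1)) (k+1))) = _
    rw [if_neg (by simp [hist] : ¬((hist (fun i => Y (i+1)) (k+1)).isEmpty = true))]
  have hcy0 := cy_spec (Y 0) hP0
  refine ⟨?_, ?_, ?_, ?_⟩
  · intro i
    cases i with
    | zero => rw [hout0]; exact ⟨hcy0.1, hcy0.2.1⟩
    | succ k =>
      rw [houts k]
      exact ⟨(hspec.1 k).1, (hspec.1 k).2⟩
  · rw [hout0]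
    exact hcy0.2.2.2.1
  · intro i
    cases i with
    | zero =>
      rw [hout0, houts 0]
      have := hspec.2.1
      apply this
      · exact by simp
    | succ k =>
      rw [houts k, houts (k+1)]
      exact hspec.2.2.1 k
  · obtain ⟨j, hj⟩ := hspec.2.2.2
    refine ⟨j + 1, ?_⟩
    have h1 : hist (fun i => σ (hist Y (i + 1))) (j+1) =
        cy (Y 0) :: hist (fun i => cσ (Y 0) (hist Y' (i+1))) j := by
      rw [hist_cons]
      refine congrArg₂ List.cons ?_ ?_
      · exact hout0
      · exact hist_congr j (fun i => houts i)
    rw [h1]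
    have h2 : t ++ (cy (Y 0) :: hist (fun i => cσ (Y 0) (hist Y' (i+1))) j) =
        (t ++ [cy (Y 0)]) ++ hist (fun i => cσ (Y 0) (hist Y' (i+1))) j := by
      simp
    rw [h2]
    exact hj

lemma acc_to_winG {b : Module.Basis ℕ 𝔽 E} {Dp : List E → Prop} {Z : Submodule 𝔽 E} {n : ℕ} {t : List E}
    (h : AccP b Dp Z n t) : WinG b Dp Z t :=
  h (fun _ t => WinG b Dp Z t) (win_closed b Dp Z)

end Part3

noncomputable section Part4
open Classical Submodule Set

variable {𝔽 : Type} [Field 𝔽] {E : Type} [AddCommGroup E] [Module 𝔽 E]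
variable (b : Module.Basis ℕ 𝔽 E) (A : ℕ → Set (ℕ → E)) (xs : List E)
variable (X0 : BS b) (f1 : ℕ → List E × ℕ) (f2 f3 : ℕ → List E)

lemma iwinsF_antimono {V V' : Submodule 𝔽 E} (hV : V' ≤ V) {p : List E} {C : Set (ℕ → E)}
    (h : IWinsF b V p C) : IWinsF b V' p C := by
  obtain ⟨σ, hσ⟩ := h
  exact ⟨σ, fun x hx => hσ x (fun i => ⟨hV (hx i).1, (hx i).2⟩)⟩

/-! ### Fusion 1 : deciding the pairs -/

def step1 : ℕ → BS b → BS b := fun k W =>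
  if h : ∃ W' : BS b, W'.spn ≤ W.spn ∧ IWinsF b W'.spn (xs ++ (f1 k).1) (A (f1 k).2)ᶜ
  then h.choose else W

def V1 : ℕ → BS b := fun k => Nat.rec X0 (step1 b A xs f1) k

lemma V1_succ (k : ℕ) : V1 b A xs X0 f1 (k+1) = step1 b A xs f1 k (V1 b A xs X0 f1 k) := rfl

lemma V1_desc : ∀ k, (V1 b A xs X0 f1 (k+1)).spn ≤ (V1 b A xs X0 f1 k).spn := by
  intro k
  rw [V1_succ, step1]
  split
  · next h => exact h.choose_spec.1
  · exact le_refl _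

def s1 : ℕ → E := fuseSeq b (V1 b A xs X0 f1)

def Z1 : Submodule 𝔽 E := Submodule.span 𝔽 (Set.range (s1 b A xs X0 f1))

lemma Z1_le : Z1 b A xs X0 f1 ≤ X0.spn :=
  fuseSeq_span_le _ (V1_desc b A xs X0 f1)

/-- the "good" pairs: I can nowhere below Z1 avoid `A n` after position `xs ++ p`. -/
def good (p : List E) (n : ℕ) : Prop :=
  ∀ V : Submodule 𝔽 E, IsBlockSubspace b V → V ≤ Z1 b A xs X0 f1 →
    ¬ IWinsF b V (xs ++ p) (A n)ᶜ

def k1 (p : List E) (n : ℕ) (hf1 : Function.Surjective f1) : ℕ := (hf1 (p, n)).choose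

lemma dich1 (hf1 : Function.Surjective f1) (p : List E) (n : ℕ) :
    good b A xs X0 f1 p n ∨
      IWinsF b (V1 b A xs X0 f1 (k1 f1 p n hf1 + 1)).spn (xs ++ p) (A n)ᶜ := by
  set k := k1 f1 p n hf1 with hk
  have hfk : f1 k = (p, n) := (hf1 (p, n)).choose_spec
  by_cases hd : ∃ W' : BS b, W'.spn ≤ (V1 b A xs X0 f1 k).spn ∧
      IWinsF b W'.spn (xs ++ (f1 k).1) (A (f1 k).2)ᶜ
  · right
    have h1 : V1 b A xs X0 f1 (k+1) = hd.choose := by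
      rw [V1_succ, step1, dif_pos hd]
    rw [h1]
    have := hd.choose_spec.2
    have hp : p = (f1 k).1 := by rw [hfk]
    have hn : n = (f1 k).2 := by rw [hfk]
    rw [hp, hn]
    exact this
  · left
    intro V hV hVZ hWin
    apply hd
    obtain ⟨v, hvblk, rfl⟩ := hV
    obtain ⟨W', hW'le, hW'hi⟩ := bs_tail (⟨v, hvblk⟩ : BS b) (msup b (s1 b A xs X0 f1 k))
    have hW'V1 : W'.spn ≤ (V1 b A xs X0 f1 k).spn := by
      rw [BS.spn, Submodule.span_le]
      rintro y ⟨i, rfl⟩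
      have h1 : W'.seq i ∈ Z1 b A xs X0 f1 := hVZ (hW'le (W'.seq_mem i))
      have h2 := fuseSeq_tail (V1 b A xs X0 f1) (V1_desc b A xs X0 f1) h1 (hW'hi i)
      exact V1_desc b A xs X0 f1 k h2
    refine ⟨W', hW'V1, ?_⟩
    rw [hfk]
    exact iwinsF_antimono b (le_trans hW'le (le_refl _)) hWin

/-- the set of positions whose diagonal pair is good. -/
def Dp : List E → Prop := fun t => t ≠ [] ∧ good b A xs X0 f1 t (t.length - 1)

/-! ### Fusion 2 : stabilizing acceptance -/

def Z1BS : BS b := ⟨s1 b A xs X0 f1, fuseSeq_blk _⟩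

lemma Z1BS_spn : (Z1BS b A xs X0 f1).spn = Z1 b A xs X0 f1 := rfl

def step2 : ℕ → BS b → BS b := fun k W =>
  if h : ∃ W' : BS b, W'.spn ≤ W.spn ∧ ∃ n, AccP b (Dp b A xs X0 f1) W'.spn n (f2 k)
  then h.choose else W

def V2 : ℕ → BS b := fun k => Nat.rec (Z1BS b A xs X0 f1) (step2 b A xs X0 f1 f2) k

lemma V2_succ (k : ℕ) :
    V2 b A xs X0 f1 f2 (k+1) = step2 b A xs X0 f1 f2 k (V2 b A xs X0 f1 f2 k) := rfl

lemma V2_desc : ∀ k, (V2 b A xs X0 f1 f2 (k+1)).spn ≤ (V2 b A xs X0 f1 f2 k).spn := by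
  intro k
  rw [V2_succ, step2]
  split
  · next h => exact h.choose_spec.1
  · exact le_refl _

def s2 : ℕ → E := fuseSeq b (V2 b A xs X0 f1 f2)

def SS : Submodule 𝔽 E := Submodule.span 𝔽 (Set.range (s2 b A xs X0 f1 f2))

def SBS : BS b := ⟨s2 b A xs X0 f1 f2, fuseSeq_blk _⟩

lemma SBS_spn : (SBS b A xs X0 f1 f2).spn = SS b A xs X0 f1 f2 := rfl

lemma SS_le : SS b A xs X0 f1 f2 ≤ Z1 b A xs X0 f1 :=
  fuseSeq_span_le _ (V2_desc b A xs X0 f1 f2)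

/-- a position is "accepted" somewhere below `S`. -/
def statusP (t : List E) : Prop :=
  ∃ W : BS b, W.spn ≤ SS b A xs X0 f1 f2 ∧ ∃ n, AccP b (Dp b A xs X0 f1) W.spn n t

/-- Stability: an accepted position is accepted below every block subspace of `S`. -/
lemma stab (hf2 : Function.Surjective f2) {t : List E} (h : statusP b A xs X0 f1 f2 t) :
    ∀ W : BS b, W.spn ≤ SS b A xs X0 f1 f2 →
      ∃ n, AccP b (Dp b A xs X0 f1) W.spn n t := by
  intro W hWS
  set k := (hf2 t).choose with hk
  have hfk : f2 k = t := (hf2 t).choose_spec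
  by_cases hd : ∃ W' : BS b, W'.spn ≤ (V2 b A xs X0 f1 f2 k).spn ∧
      ∃ n, AccP b (Dp b A xs X0 f1) W'.spn n (f2 k)
  · -- the fusion shrank into an acceptance witness
    have h1 : V2 b A xs X0 f1 f2 (k+1) = hd.choose := by
      rw [V2_succ, step2, dif_pos hd]
    obtain ⟨n, hacc⟩ := hd.choose_spec.2
    rw [← h1] at hacc
    -- move to W ⊓ EN (msup (s2 k)) and then germ up to W
    set N := msup b (s2 b A xs X0 f1 f2 k) with hN
    have hWEN : W.spn ⊓ EN b N ≤ (V2 b A xs X0 f1 f2 (k+1)).spn := by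
      intro y hy
      obtain ⟨hy1, hy2⟩ := Submodule.mem_inf.1 hy
      exact fuseSeq_tail (V2 b A xs X0 f1 f2) (V2_desc b A xs X0 f1 f2)
        (hWS hy1) (mem_EN.1 hy2)
    have hacc2 := acc_antimono hWEN hacc
    have hacc3 := acc_germ N hacc2
    rw [hfk] at hacc3
    exact ⟨max n N, hacc3⟩
  · -- impossible : t would not have status
    exfalso
    apply hd
    obtain ⟨W0, hW0S, n, hW0acc⟩ := h
    obtain ⟨W'', hW''le, hW''hi⟩ := bs_tail W0 (msup b (s2 b A xs X0 f1 f2 k))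
    have hW''V2 : W''.spn ≤ (V2 b A xs X0 f1 f2 k).spn := by
      rw [BS.spn, Submodule.span_le]
      rintro y ⟨i, rfl⟩
      have h1 : W''.seq i ∈ SS b A xs X0 f1 f2 := hW0S (hW''le (W''.seq_mem i))
      exact V2_desc b A xs X0 f1 f2 k
        (fuseSeq_tail (V2 b A xs X0 f1 f2) (V2_desc b A xs X0 f1 f2) h1 (hW''hi i))
    refine ⟨W'', hW''V2, n, ?_⟩
    rw [hfk]
    exact acc_antimono hW''le hW0acc

lemma dp_status {t : List E} (h : Dp b A xs X0 f1 t) : statusP b A xs X0 f1 f2 t :=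
  ⟨SBS b A xs X0 f1 f2, le_refl _, 0, acc_base h⟩

/-! ### Fusion 3 : below S, when the empty position has no status -/

def step3 : ℕ → BS b → BS b := fun k W =>
  if h : ∃ W' : BS b, W'.spn ≤ W.spn ∧
      (∀ y, y ∈ W'.spn → y ≠ 0 → NatLt b 0 y → chainOK b (f3 k) y →
        ¬ statusP b A xs X0 f1 f2 (f3 k ++ [y]))
  then h.choose else W

def V3 : ℕ → BS b := fun k => Nat.rec (SBS b A xs X0 f1 f2) (step3 b A xs X0 f1 f2 f3) k

lemma V3_succ (k : ℕ) :
    V3 b A xs X0 f1 f2 f3 (k+1) = step3 b A xs X0 f1 f2 f3 k (V3 b A xs X0 f1 f2 f3 k) := rfl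

lemma V3_desc : ∀ k, (V3 b A xs X0 f1 f2 f3 (k+1)).spn ≤ (V3 b A xs X0 f1 f2 f3 k).spn := by
  intro k
  rw [V3_succ, step3]
  split
  · next h => exact h.choose_spec.1
  · exact le_refl _

lemma V3_le_S : ∀ k, (V3 b A xs X0 f1 f2 f3 k).spn ≤ SS b A xs X0 f1 f2 := by
  intro k
  induction k with
  | zero => exact le_refl _
  | succ k ih => exact le_trans (V3_desc b A xs X0 f1 f2 f3 k) ih

def s3 : ℕ → E := fuseSeq b (V3 b A xs X0 f1 f2 f3)

def Z2 : Submodule 𝔽 E := Submodule.span 𝔽 (Set.range (s3 b A xs X0 f1 f2 f3))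

lemma Z2_le_S : Z2 b A xs X0 f1 f2 f3 ≤ SS b A xs X0 f1 f2 :=
  fuseSeq_span_le _ (V3_desc b A xs X0 f1 f2 f3)

/-- spec of fusion 3 at non-status positions. -/
lemma step3_spec (hf2 : Function.Surjective f2) (k : ℕ)
    (h : ¬ statusP b A xs X0 f1 f2 (f3 k)) :
    ∀ y, y ∈ (V3 b A xs X0 f1 f2 f3 (k+1)).spn → y ≠ 0 → NatLt b 0 y →
      chainOK b (f3 k) y → ¬ statusP b A xs X0 f1 f2 (f3 k ++ [y]) := by
  have hex : ∃ W' : BS b, W'.spn ≤ (V3 b A xs X0 f1 f2 f3 k).spn ∧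
      (∀ y, y ∈ W'.spn → y ≠ 0 → NatLt b 0 y → chainOK b (f3 k) y →
        ¬ statusP b A xs X0 f1 f2 (f3 k ++ [y])) := by
    -- the current subspace has no acceptance of (f3 k)
    have hnacc : ¬ AccP b (Dp b A xs X0 f1) (V3 b A xs X0 f1 f2 f3 k).spn 0 (f3 k) := by
      intro hacc
      exact h ⟨V3 b A xs X0 f1 f2 f3 k, V3_le_S b A xs X0 f1 f2 f3 k, 0, hacc⟩
    obtain ⟨hnD, U, hU, hUt, hUy⟩ := acc_neg_unfold hnacc
    obtain ⟨W', hW'U⟩ := bs_in_tall hUt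
    refine ⟨W', le_trans hW'U hU, ?_⟩
    intro y hy h0 hn hc hst
    -- y has no acceptance below V3 k, contradicting stability
    obtain ⟨n', hacc'⟩ := stab b A xs X0 f1 f2 hf2 hst (V3 b A xs X0 f1 f2 f3 k)
      (V3_le_S b A xs X0 f1 f2 f3 k)
    exact hUy y (hW'U hy) h0 hn hc n' hacc'
  have h1 : V3 b A xs X0 f1 f2 f3 (k+1) = hex.choose := by
    rw [V3_succ, step3, dif_pos hex]
  rw [h1]
  exact hex.choose_spec.2


/-! ### The amalgamated strategy for player I -/

def k3 (hf3 : Function.Surjective f3) (t : List E) : ℕ := (hf3 t).choose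

def sig1 (hf1 : Function.Surjective f1) (p : List E) (n : ℕ) : List E → ℕ :=
  if h : ¬ good b A xs X0 f1 p n then
    ((dich1 b A xs X0 f1 hf1 p n).resolve_left h).choose
  else fun _ => 0

lemma sig1_spec (hf1 : Function.Surjective f1) {p : List E} {n : ℕ}
    (h : ¬ good b A xs X0 f1 p n) :
    ∀ x : ℕ → E,
      (∀ i, x i ∈ (V1 b A xs X0 f1 (k1 f1 p n hf1 + 1)).spn ∧ x i ≠ 0 ∧
          NatLt b (sig1 b A xs X0 f1 hf1 p n (hist x i)) (x i) ∧
          VecLt b (x i) (x (i + 1))) →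
      (∀ i, sig1 b A xs X0 f1 hf1 p n (hist x i) < sig1 b A xs X0 f1 hf1 p n (hist x (i + 1))) ∧
        prefCat (xs ++ p) x ∈ (A n)ᶜ := by
  have hIW := (dich1 b A xs X0 f1 hf1 p n).resolve_left h
  have hs : sig1 b A xs X0 f1 hf1 p n = hIW.choose := by
    rw [sig1, dif_pos h]
  rw [hs]
  exact hIW.choose_spec

def compJ (hf1 : Function.Surjective f1) (l : List E) (j : ℕ) : ℕ :=
  max (msup b (s1 b A xs X0 f1 (k1 f1 (l.take (j+1)) j hf1)))
      (sig1 b A xs X0 f1 hf1 (l.take (j+1)) j (l.drop (j+1)))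

def rawB (hf1 : Function.Surjective f1) (hf3 : Function.Surjective f3) (l : List E) : ℕ :=
  max (msup b (s3 b A xs X0 f1 f2 f3 (k3 f3 hf3 l)))
      ((Finset.range l.length).sup (compJ b A xs X0 f1 hf1 l))

def sigB (hf1 : Function.Surjective f1) (hf3 : Function.Surjective f3) (l : List E) : ℕ :=
  (Finset.range (l.length + 1)).sup (fun k => rawB b A xs X0 f1 f2 f3 hf1 hf3 (l.take k))
    + l.length + 1

lemma sigB_hist (hf1 : Function.Surjective f1) (hf3 : Function.Surjective f3)
    (x : ℕ → E) (i : ℕ) :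
    sigB b A xs X0 f1 f2 f3 hf1 hf3 (hist x i) =
      (Finset.range (i + 1)).sup (fun k => rawB b A xs X0 f1 f2 f3 hf1 hf3 (hist x k))
        + i + 1 := by
  rw [sigB, length_hist]
  congr 1
  congr 1
  apply Finset.sup_congr rfl
  intro k hk
  have hk' : k ≤ i := by
    have := Finset.mem_range.1 hk
    omega
  rw [take_hist x hk']

lemma sigB_mono (hf1 : Function.Surjective f1) (hf3 : Function.Surjective f3)
    (x : ℕ → E) (i : ℕ) :
    sigB b A xs X0 f1 f2 f3 hf1 hf3 (hist x i) <
      sigB b A xs X0 f1 f2 f3 hf1 hf3 (hist x (i + 1)) := by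
  rw [sigB_hist, sigB_hist]
  have : (Finset.range (i + 1)).sup (fun k => rawB b A xs X0 f1 f2 f3 hf1 hf3 (hist x k)) ≤
      (Finset.range (i + 1 + 1)).sup (fun k => rawB b A xs X0 f1 f2 f3 hf1 hf3 (hist x k)) :=
    Finset.sup_mono (Finset.range_subset_range.2 (by omega))
  omega

lemma sigB_ge_raw (hf1 : Function.Surjective f1) (hf3 : Function.Surjective f3) (l : List E) :
    rawB b A xs X0 f1 f2 f3 hf1 hf3 l ≤ sigB b A xs X0 f1 f2 f3 hf1 hf3 l := by
  rw [sigB]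
  have h1 : rawB b A xs X0 f1 f2 f3 hf1 hf3 (l.take l.length) ≤
      (Finset.range (l.length + 1)).sup
        (fun k => rawB b A xs X0 f1 f2 f3 hf1 hf3 (l.take k)) :=
    Finset.le_sup (f := fun k => rawB b A xs X0 f1 f2 f3 hf1 hf3 (l.take k))
      (Finset.mem_range.2 (by omega))
  rw [List.take_length] at h1
  omega

lemma sigB_ge_thr (hf1 : Function.Surjective f1) (hf3 : Function.Surjective f3) (l : List E) :
    msup b (s3 b A xs X0 f1 f2 f3 (k3 f3 hf3 l)) ≤ sigB b A xs X0 f1 f2 f3 hf1 hf3 l :=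
  le_trans (le_max_left _ _) (sigB_ge_raw b A xs X0 f1 f2 f3 hf1 hf3 l)

lemma sigB_ge_compJ (hf1 : Function.Surjective f1) (hf3 : Function.Surjective f3)
    {l : List E} {j : ℕ} (hj : j < l.length) :
    compJ b A xs X0 f1 hf1 l j ≤ sigB b A xs X0 f1 f2 f3 hf1 hf3 l := by
  refine le_trans ?_ (sigB_ge_raw b A xs X0 f1 f2 f3 hf1 hf3 l)
  refine le_trans ?_ (le_max_right _ _)
  exact Finset.le_sup (Finset.mem_range.2 hj)

/-! ### Case B : player I wins -/

lemma caseB (hf1 : Function.Surjective f1) (hf2 : Function.Surjective f2)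
    (hf3 : Function.Surjective f3)
    (hB : ¬ statusP b A xs X0 f1 f2 []) :
    IWinsF b (Z2 b A xs X0 f1 f2 f3) xs (⋃ n, A n)ᶜ := by
  refine ⟨sigB b A xs X0 f1 f2 f3 hf1 hf3, ?_⟩
  intro x hx
  have hxZ2 : ∀ i, x i ∈ Z2 b A xs X0 f1 f2 f3 := fun i => (hx i).1
  have hx0 : ∀ i, x i ≠ 0 := fun i => (hx i).2.1
  have hxN : ∀ i, NatLt b (sigB b A xs X0 f1 f2 f3 hf1 hf3 (hist x i)) (x i) :=
    fun i => (hx i).2.2.1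
  have hxV : ∀ i, VecLt b (x i) (x (i + 1)) := fun i => (hx i).2.2.2
  refine ⟨fun i => sigB_mono b A xs X0 f1 f2 f3 hf1 hf3 x i, ?_⟩
  -- master invariant : no position along the play has status
  have master : ∀ i, ¬ statusP b A xs X0 f1 f2 (hist x i) := by
    intro i
    induction i with
    | zero =>
      rw [hist_zero]
      exact hB
    | succ i ih =>
      set t := hist x i with ht
      set k := (hf3 t).choose with hkdef
      have hfk : f3 k = t := (hf3 t).choose_spec
      have hk3 : k3 f3 hf3 t = k := rfl
      have hspec := step3_spec b A xs X0 f1 f2 f3 hf2 k (by rw [hfk]; exact ih)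
      rw [hfk] at hspec
      have hyV3 : x i ∈ (V3 b A xs X0 f1 f2 f3 (k + 1)).spn := by
        apply fuseSeq_tail (V3 b A xs X0 f1 f2 f3) (V3_desc b A xs X0 f1 f2 f3) (hxZ2 i)
        apply natLt_mono _ (hxN i)
        rw [← hk3]
        exact sigB_ge_thr b A xs X0 f1 f2 f3 hf1 hf3 t
      have hchain : chainOK b t (x i) := by
        intro v hv
        cases i with
        | zero => rw [ht] at hv; rw [hist_zero] at hv; simp at hv
        | succ m =>
          rw [ht, getLast?_hist] at hv
          have hvm : v = x m := by
            injection hv with h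
            exact h.symm
          rw [hvm]
          exact hxV m
      have := hspec (x i) hyV3 (hx0 i) (natLt_mono (Nat.zero_le _) (hxN i)) hchain
      rw [← hist_succ] at this
      exact this
  -- the diagonal pairs are all bad
  have hng : ∀ j, ¬ good b A xs X0 f1 (hist x (j + 1)) j := by
    intro j hg
    apply master (j + 1)
    apply dp_status
    refine ⟨hist_ne_nil x j, ?_⟩
    have hl : (hist x (j + 1)).length - 1 = j := by
      rw [length_hist]
      omega
    rw [hl]
    exact hg
  -- each bad strategy is dominated, so the outcome avoids every A j
  have hwin : ∀ j, prefCat xs x ∉ A j := by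
    intro j
    have hcompJval : ∀ i, compJ b A xs X0 f1 hf1 (hist x (i + j + 1)) j =
        max (msup b (s1 b A xs X0 f1 (k1 f1 (hist x (j + 1)) j hf1)))
          (sig1 b A xs X0 f1 hf1 (hist x (j + 1)) j (hist (fun r => x (r + (j + 1))) i)) := by
      intro i
      rw [compJ]
      have h1 : (hist x (i + j + 1)).take (j + 1) = hist x (j + 1) :=
        take_hist x (by omega)
      have h2 : (hist x (i + j + 1)).drop (j + 1) = hist (fun r => x (r + (j + 1))) i := by
        have he : i + j + 1 = (j + 1) + i := by omega
        rw [he]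
        exact drop_hist x (j + 1) i
      rw [h1, h2]
    have hcomp : ∀ i, (fun r => x (r + (j + 1))) i ∈
          (V1 b A xs X0 f1 (k1 f1 (hist x (j + 1)) j hf1 + 1)).spn ∧
        (fun r => x (r + (j + 1))) i ≠ 0 ∧
        NatLt b (sig1 b A xs X0 f1 hf1 (hist x (j + 1)) j
          (hist (fun r => x (r + (j + 1))) i)) ((fun r => x (r + (j + 1))) i) ∧
        VecLt b ((fun r => x (r + (j + 1))) i) ((fun r => x (r + (j + 1))) (i + 1)) := by
      intro i
      have hidx : (fun r => x (r + (j + 1))) i = x (i + j + 1) := by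
        show x (i + (j + 1)) = x (i + j + 1)
        congr 1 <;> omega
      have hle1 : compJ b A xs X0 f1 hf1 (hist x (i + j + 1)) j ≤
          sigB b A xs X0 f1 f2 f3 hf1 hf3 (hist x (i + j + 1)) :=
        sigB_ge_compJ b A xs X0 f1 f2 f3 hf1 hf3 (by rw [length_hist]; omega)
      have hNat : NatLt b (compJ b A xs X0 f1 hf1 (hist x (i + j + 1)) j) (x (i + j + 1)) :=
        natLt_mono hle1 (hxN (i + j + 1))
      rw [hcompJval i] at hNat
      refine ⟨?_, ?_, ?_, ?_⟩
      · rw [hidx]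
        apply fuseSeq_tail (V1 b A xs X0 f1) (V1_desc b A xs X0 f1)
        · exact SS_le b A xs X0 f1 f2 (Z2_le_S b A xs X0 f1 f2 f3 (hxZ2 (i + j + 1)))
        · exact natLt_mono (le_max_left _ _) hNat
      · rw [hidx]; exact hx0 (i + j + 1)
      · rw [hidx]
        exact natLt_mono (le_max_right _ _) hNat
      · have h1 : (fun r => x (r + (j + 1))) (i + 1) = x ((i + j + 1) + 1) := by
          show x ((i + 1) + (j + 1)) = x ((i + j + 1) + 1)
          congr 1
          omega
        rw [hidx, h1]
        exact hxV (i + j + 1)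
    have hres := (sig1_spec b A xs X0 f1 hf1 (hng j) (fun r => x (r + (j + 1))) hcomp).2
    rw [prefCat_shift xs x (j + 1)] at hres
    exact hres
  rw [Set.mem_compl_iff]
  intro hmem
  obtain ⟨s, ⟨j, rfl⟩, hj⟩ := hmem
  exact hwin j hj


end Part4

theorem countable_union_split
    {𝔽 : Type} [Field 𝔽] [Countable 𝔽]
    {E : Type} [AddCommGroup E] [Module 𝔽 E]
    (b : Module.Basis ℕ 𝔽 E) (A : ℕ → Set (ℕ → E))
    (xs : List E) (hxs : IsFinBlockSeq b xs)
    (X : Submodule 𝔽 E) (hX : IsBlockSubspace b X) :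
    ∃ Z : Submodule 𝔽 E, Z ≤ X ∧ IsBlockSubspace b Z ∧
      (IIWinsG b Z []
          {z : ℕ → E | ∃ n : ℕ, ∀ V : Submodule 𝔽 E, IsBlockSubspace b V → V ≤ Z →
            ¬IWinsF b V (xs ++ hist z (n + 1)) (A n)ᶜ} ∨
        IWinsF b Z xs (⋃ n, A n)ᶜ) := by
  classical
  obtain ⟨x0seq, hx0blk, hx0span⟩ := hX
  haveI : Countable E := Countable.of_equiv _ b.repr.toEquiv.symm
  obtain ⟨f1, hf1⟩ := exists_surjective_nat (List E × ℕ)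
  obtain ⟨f2, hf2⟩ := exists_surjective_nat (List E)
  obtain ⟨f3, hf3⟩ := exists_surjective_nat (List E)
  set X0 : BS b := ⟨x0seq, hx0blk⟩ with hX0
  have hX0spn : X0.spn = X := hx0span.symm
  by_cases hA : statusP b A xs X0 f1 f2 []
  · -- Case A : II wins the Gowers game
    refine ⟨SS b A xs X0 f1 f2, ?_, ⟨s2 b A xs X0 f1 f2, fuseSeq_blk _, rfl⟩, Or.inl ?_⟩
    · rw [← hX0spn]
      exact le_trans (SS_le b A xs X0 f1 f2) (Z1_le b A xs X0 f1)
    · obtain ⟨n, hacc⟩ := stab b A xs X0 f1 f2 hf2 hA (SBS b A xs X0 f1 f2) (le_refl _)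
      obtain ⟨σ, hσ⟩ := acc_to_winG hacc
      refine ⟨σ, fun Y hY => ?_⟩
      obtain ⟨hc1, hch, hc3, j, hhit⟩ := hσ Y hY
      refine ⟨fun i => ⟨(hc1 i).1, (hc1 i).2, hc3 i⟩, ?_⟩
      rw [List.nil_append] at hhit
      cases j with
      | zero =>
        exfalso
        rw [hist_zero] at hhit
        exact hhit.1 rfl
      | succ m =>
        refine Set.mem_setOf.2 ⟨m, ?_⟩
        intro V hVbs hVle hWin
        have hgood := hhit.2
        have hl : (hist (fun i => σ (hist Y (i + 1))) (m + 1)).length - 1 = m := by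
          rw [length_hist]
          omega
        rw [hl] at hgood
        apply hgood V hVbs
          (le_trans hVle (le_trans (le_refl _) (SS_le b A xs X0 f1 f2)))
        have hpc : prefCat ([] : List E) (fun i => σ (hist Y (i + 1))) =
            (fun i => σ (hist Y (i + 1))) := prefCat_nil _
        rw [hpc] at hWin
        exact hWin
  · -- Case B : I wins the asymptotic game
    refine ⟨Z2 b A xs X0 f1 f2 f3, ?_, ⟨s3 b A xs X0 f1 f2 f3, fuseSeq_blk _, rfl⟩,
      Or.inr (caseB b A xs X0 f1 f2 f3 hf1 hf2 hf3 hA)⟩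
    rw [← hX0spn]
    exact le_trans (Z2_le_S b A xs X0 f1 f2 f3)
      (le_trans (SS_le b A xs X0 f1 f2) (Z1_le b A xs X0 f1))
end

section
/- Let X be a block subspace and ℬ ⊆ E^∞. If player I has a strategy in the infinite asymptotic game F_X to play in ℬ, then for every sequence Δ > 0 there is a block subspace Y ⊆ X such that 𝔅(Y) ⊆ ℬ_Δ. -/
section Defs

variable {𝔽 : Type} [Field 𝔽] {E : Type} [AddCommGroup E] [Module 𝔽 E]

/-- `𝔅(X)`: the set of infinite block sequences of vectors of `X` of norm at most `1`. -/
def BlockSeqIn (b : Module.Basis ℕ 𝔽 E) (Nm : E → ℝ) (X : Submodule 𝔽 E) : Set (ℕ → E) :=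
  {x | IsBlockSeq b x ∧ ∀ i, x i ∈ X ∧ Nm (x i) ≤ 1}

/-- The `Δ`-expansion `A_Δ` of a set `A ⊆ E^∞`. -/
def Expand (Nm : E → ℝ) (Δ : ℕ → ℝ) (A : Set (ℕ → E)) : Set (ℕ → E) :=
  {z | ∃ x ∈ A, ∀ i, Nm (x i - z i) < Δ i}

/-- A set `A ⊆ E^∞` is large if it meets `𝔅(X)` for every block subspace `X`. -/
def Large (b : Module.Basis ℕ 𝔽 E) (Nm : E → ℝ) (A : Set (ℕ → E)) : Prop :=
  ∀ X : Submodule 𝔽 E, IsBlockSubspace b X → (A ∩ BlockSeqIn b Nm X).Nonempty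

end Defs


section Aux

variable {𝔽 : Type} [Field 𝔽] {E : Type} [AddCommGroup E] [Module 𝔽 E]

lemma BSEsupp_ne (b : Module.Basis ℕ 𝔽 E) {x : E} (hx : x ≠ 0) : (supp b x).Nonempty :=
  Finsupp.support_nonempty_iff.2 (fun h => hx (by simpa using b.repr.map_eq_zero_iff.1 h))

lemma BSEsupp_subset (b : Module.Basis ℕ 𝔽 E) {s : Set E} {x : E} (hx : x ∈ Submodule.span 𝔽 s) :
    ∀ p ∈ supp b x, ∃ v ∈ s, p ∈ supp b v := by
  induction hx using Submodule.span_induction with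
  | mem v hv => exact fun p hp => ⟨v, hv, hp⟩
  | zero => intro p hp; simp [supp] at hp
  | add u w _ _ hu hw =>
      intro p hp
      simp only [supp, map_add] at hp
      rcases Finset.mem_union.1 (Finsupp.support_add hp) with h | h
      · exact hu p h
      · exact hw p h
  | smul a u _ hu =>
      intro p hp
      simp only [supp, map_smul] at hp
      exact hu p (Finsupp.support_smul hp)

lemma BSEvecLt_trans (b : Module.Basis ℕ 𝔽 E) {x y z : E} (hy : y ≠ 0)
    (h1 : VecLt b x y) (h2 : VecLt b y z) : VecLt b x z := by
  intro m hm n hn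
  obtain ⟨p, hp⟩ := BSEsupp_ne b hy
  exact lt_trans (h1 m hm p hp) (h2 p hp n hn)

lemma BSEblock_mono (b : Module.Basis ℕ 𝔽 E) {y : ℕ → E} (hy : IsBlockSeq b y) :
    ∀ {m n : ℕ}, m < n → VecLt b (y m) (y n) := by
  intro m n h
  induction n, h using Nat.le_induction with
  | base => exact hy.2 m
  | succ n hmn ih => exact BSEvecLt_trans b (hy.1 n) ih (hy.2 n)

end Aux

section AuxNm

variable {𝕂 : Subfield ℝ} {E : Type} [AddCommGroup E] [Module 𝕂 E]
variable {Nm : E → ℝ}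

lemma BSEnm_zero (hN0 : ∀ x : E, Nm x = 0 ↔ x = 0) : Nm (0 : E) = 0 := (hN0 0).2 rfl

lemma BSEnm_neg (hNsmul : ∀ (a : 𝕂) (x : E), Nm (a • x) = |(a : ℝ)| * Nm x) (x : E) :
    Nm (-x) = Nm x := by
  have h : (-1 : 𝕂) • x = -x := neg_one_smul _ x
  have h2 : ((-1 : 𝕂) : ℝ) = -1 := by push_cast; ring
  rw [← h, hNsmul, h2]
  simp

lemma BSEnm_nonneg (hN0 : ∀ x : E, Nm x = 0 ↔ x = 0)
    (hNadd : ∀ x y : E, Nm (x + y) ≤ Nm x + Nm y)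
    (hNsmul : ∀ (a : 𝕂) (x : E), Nm (a • x) = |(a : ℝ)| * Nm x) (x : E) : 0 ≤ Nm x := by
  have h := hNadd x (-x)
  rw [add_neg_cancel, BSEnm_zero hN0, BSEnm_neg hNsmul] at h
  linarith

lemma BSEnm_sub_le (hNadd : ∀ x y : E, Nm (x + y) ≤ Nm x + Nm y)
    (hNsmul : ∀ (a : 𝕂) (x : E), Nm (a • x) = |(a : ℝ)| * Nm x) (x y : E) :
    Nm (x - y) ≤ Nm x + Nm y := by
  rw [sub_eq_add_neg]
  calc Nm (x + -y) ≤ Nm x + Nm (-y) := hNadd x (-y)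
    _ = Nm x + Nm y := by rw [BSEnm_neg hNsmul]

lemma BSEfrac {δ A c : ℝ} (hδ : 0 < δ) (hA : 0 ≤ A) (hc : 0 < c) :
    A * (δ / (c * (A + 1))) < δ / c := by
  have hA1 : (0:ℝ) < A + 1 := by linarith
  have key : A * (δ / (c * (A + 1))) = (A / (A + 1)) * (δ / c) := by
    field_simp
  rw [key]
  have h1 : A / (A + 1) < 1 := (div_lt_one hA1).2 (by linarith)
  have h2 : 0 < δ / c := by positivity
  nlinarith [div_nonneg hA hA1.le]

lemma BSEnet (hN0 : ∀ x : E, Nm x = 0 ↔ x = 0)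
    (hNadd : ∀ x y : E, Nm (x + y) ≤ Nm x + Nm y)
    (hNsmul : ∀ (a : 𝕂) (x : E), Nm (a • x) = |(a : ℝ)| * Nm x)
    (s : Finset E) :
    ∀ δ R : ℝ, 0 < δ →
      ∃ N : Finset E, (∀ w ∈ N, w ∈ Submodule.span 𝕂 (s : Set E)) ∧
        ∀ z ∈ Submodule.span 𝕂 (s : Set E), Nm z ≤ R → ∃ w ∈ N, Nm (z - w) < δ := by
  classical
  induction s using Finset.induction_on with
  | empty =>
      intro δ R hδ
      refine ⟨{0}, by simp, ?_⟩
      intro z hz hzR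
      simp only [Finset.coe_empty, Submodule.span_empty, Submodule.mem_bot] at hz
      exact ⟨0, Finset.mem_singleton_self 0, by simpa [hz, BSEnm_zero hN0] using hδ⟩
  | @insert x s hxs ih =>
      intro δ R hδ
      have hspan : ((insert x s : Finset E) : Set E) = insert x (s : Set E) :=
        Finset.coe_insert x s
      by_cases hd : ∀ ε : ℝ, 0 < ε → ∃ v ∈ Submodule.span 𝕂 (s : Set E), Nm (x + v) < ε
      · obtain ⟨N₀, hAspan, hAcov⟩ := ih (δ/4) (R + δ/4) (by positivity)
        refine ⟨N₀, ?_, ?_⟩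
        · intro w hw
          exact Submodule.span_mono (by rw [hspan]; exact Set.subset_insert _ _) (hAspan w hw)
        · intro z hz hzR
          rw [hspan, Submodule.mem_span_insert] at hz
          obtain ⟨a, v, hv, rfl⟩ := hz
          obtain ⟨v', hv', hε⟩ := hd (δ/(4*(|(a:ℝ)|+1))) (by positivity)
          have habs : (0:ℝ) ≤ |(a:ℝ)| := abs_nonneg _
          set u : E := v - a • v' with hu
          have hum : u ∈ Submodule.span 𝕂 (s : Set E) :=
            sub_mem hv (Submodule.smul_mem _ _ hv')
          have hzu : (a • x + v) - u = a • (x + v') := by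
            rw [hu, smul_add]; abel
          have h1 : Nm ((a • x + v) - u) < δ/4 := by
            rw [hzu, hNsmul]
            have hle : |(a:ℝ)| * Nm (x + v') ≤ |(a:ℝ)| * (δ/(4*(|(a:ℝ)|+1))) :=
              mul_le_mul_of_nonneg_left hε.le habs
            have h2 : |(a:ℝ)| * (δ/(4*(|(a:ℝ)|+1))) < δ/4 := BSEfrac hδ habs (by norm_num)
            linarith
          have hun : Nm u ≤ R + δ/4 := by
            have e : u = (a • x + v) - ((a • x + v) - u) := by abel
            calc Nm u = Nm ((a • x + v) - ((a • x + v) - u)) := by rw [← e]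
              _ ≤ Nm (a • x + v) + Nm ((a • x + v) - u) := BSEnm_sub_le hNadd hNsmul _ _
              _ ≤ R + δ/4 := by linarith
          obtain ⟨w, hwN, hw⟩ := hAcov u hum hun
          refine ⟨w, hwN, ?_⟩
          have e2 : (a • x + v) - w = ((a • x + v) - u) + (u - w) := by abel
          calc Nm ((a • x + v) - w) = Nm (((a • x + v) - u) + (u - w)) := by rw [e2]
            _ ≤ Nm ((a • x + v) - u) + Nm (u - w) := hNadd _ _
            _ < δ := by linarith
      · push_neg at hd
        obtain ⟨d, hd0, hdge⟩ := hd
        rcases lt_or_ge R 0 with hR | hR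
        · exact ⟨∅, by simp, fun z hz hzR =>
            absurd ((BSEnm_nonneg hN0 hNadd hNsmul z).trans hzR) (not_le.mpr hR)⟩
        · set C := R / d with hC
          have hC0 : 0 ≤ C := div_nonneg hR hd0.le
          have hNx : 0 ≤ Nm x := BSEnm_nonneg hN0 hNadd hNsmul x
          set η := δ / (2*(Nm x + 1)) with hη
          have hη0 : 0 < η := by positivity
          obtain ⟨q, hq0, hqη⟩ := exists_rat_btwn hη0
          have hq0' : (0:ℝ) < (q:ℝ) := hq0
          obtain ⟨M, hM⟩ := exists_nat_ge (C / (q:ℝ) + 1)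
          set T : Finset 𝕂 := (Finset.Icc (-(M:ℤ)) (M:ℤ)).image (fun j : ℤ => (j : 𝕂) * (q : 𝕂)) with hT
          have hTgrid : ∀ a : 𝕂, |(a:ℝ)| ≤ C → ∃ a' ∈ T, |(a:ℝ) - ((a' : 𝕂):ℝ)| < η := by
            intro a ha
            set j : ℤ := ⌊(a:ℝ)/(q:ℝ)⌋ with hj
            have hj1 : (j:ℝ) * (q:ℝ) ≤ (a:ℝ) := (le_div_iff₀ hq0').1 (Int.floor_le _)
            have hj2 : (a:ℝ) < ((j:ℝ) + 1) * (q:ℝ) := by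
              have := Int.lt_floor_add_one ((a:ℝ)/(q:ℝ))
              have h3 := (div_lt_iff₀ hq0').1 this
              exact_mod_cast h3
            have hbound : |(a:ℝ)| / (q:ℝ) ≤ C / (q:ℝ) := by gcongr
            refine ⟨(j:𝕂) * (q:𝕂), ?_, ?_⟩
            · refine Finset.mem_image.2 ⟨j, ?_, rfl⟩
              rw [Finset.mem_Icc]
              have hfl : (j:ℝ) ≤ (a:ℝ)/(q:ℝ) := Int.floor_le _
              have hfg : (a:ℝ)/(q:ℝ) - 1 < (j:ℝ) := by
                have := Int.lt_floor_add_one ((a:ℝ)/(q:ℝ)); linarith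
              have hub : (a:ℝ)/(q:ℝ) ≤ C/(q:ℝ) := by
                gcongr
                exact (le_abs_self _).trans ha
              have hlb : -(C/(q:ℝ)) ≤ (a:ℝ)/(q:ℝ) := by
                rw [← neg_div]
                gcongr
                exact neg_le_of_abs_le ha
              constructor
              · have : -((M:ℝ)) ≤ (j:ℝ) := by linarith
                exact_mod_cast this
              · have : (j:ℝ) ≤ (M:ℝ) := by linarith
                exact_mod_cast this
            · have hcast : (((j:𝕂) * (q:𝕂) : 𝕂) : ℝ) = (j:ℝ) * (q:ℝ) := by push_cast; ring
              rw [hcast, abs_lt]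
              constructor
              · have : 0 ≤ (a:ℝ) - (j:ℝ)*(q:ℝ) := by linarith
                linarith
              · nlinarith [hqη]
          have hRC : (0:ℝ) ≤ R + C * Nm x := by
            have := mul_nonneg hC0 hNx; linarith
          obtain ⟨N₀, hAspan, hAcov⟩ := ih (δ/2) (R + C * Nm x) (by positivity)
          refine ⟨(T ×ˢ N₀).image (fun p : 𝕂 × E => p.1 • x + p.2), ?_, ?_⟩
          · intro w hw
            simp only [Finset.mem_image, Finset.mem_product] at hw
            obtain ⟨⟨a', w'⟩, ⟨_, hw'⟩, rfl⟩ := hw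
            rw [hspan]
            exact Submodule.add_mem _
              (Submodule.smul_mem _ _ (Submodule.subset_span (Set.mem_insert _ _)))
              (Submodule.span_mono (Set.subset_insert _ _) (hAspan _ hw'))
          · intro z hz hzR
            rw [hspan, Submodule.mem_span_insert] at hz
            obtain ⟨a, v, hv, rfl⟩ := hz
            have haC : |(a:ℝ)| ≤ C := by
              rcases eq_or_ne a 0 with rfl | ha
              · simpa using hC0
              · have hinv : a • (x + a⁻¹ • v) = a • x + v := by
                  rw [smul_add, smul_inv_smul₀ ha]
                have h1 : Nm (a • x + v) = |(a:ℝ)| * Nm (x + a⁻¹ • v) := by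
                  rw [← hinv, hNsmul]
                have h2 : d ≤ Nm (x + a⁻¹ • v) := hdge _ (Submodule.smul_mem _ _ hv)
                have h3 : |(a:ℝ)| * d ≤ R := by
                  calc |(a:ℝ)| * d ≤ |(a:ℝ)| * Nm (x + a⁻¹ • v) :=
                        mul_le_mul_of_nonneg_left h2 (abs_nonneg _)
                    _ = Nm (a • x + v) := h1.symm
                    _ ≤ R := hzR
                rw [hC, le_div_iff₀ hd0]
                exact h3
            have hvnorm : Nm v ≤ R + C * Nm x := by
              have e : v = (a • x + v) - a • x := by abel
              calc Nm v = Nm ((a • x + v) - a • x) := by rw [← e]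
                _ ≤ Nm (a • x + v) + Nm (a • x) := BSEnm_sub_le hNadd hNsmul _ _
                _ ≤ R + |(a:ℝ)| * Nm x := by rw [hNsmul]; linarith
                _ ≤ R + C * Nm x := by nlinarith [hNx, haC]
            obtain ⟨a', ha'T, ha'⟩ := hTgrid a haC
            obtain ⟨w, hwN, hwcov⟩ := hAcov v hv hvnorm
            refine ⟨a' • x + w,
              Finset.mem_image.2 ⟨(a', w), Finset.mem_product.2 ⟨ha'T, hwN⟩, rfl⟩, ?_⟩
            have hdecomp : (a • x + v) - (a' • x + w) = (a - a') • x + (v - w) := by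
              rw [sub_smul]; abel
            have hcast : |((a - a' : 𝕂) : ℝ)| = |(a:ℝ) - ((a' : 𝕂):ℝ)| := by push_cast; ring_nf
            calc Nm ((a • x + v) - (a' • x + w)) = Nm ((a - a') • x + (v - w)) := by rw [hdecomp]
              _ ≤ Nm ((a - a') • x) + Nm (v - w) := hNadd _ _
              _ = |(a:ℝ) - ((a' : 𝕂):ℝ)| * Nm x + Nm (v - w) := by rw [hNsmul, hcast]
              _ < δ := by
                have h5 : |(a:ℝ) - ((a' : 𝕂):ℝ)| * Nm x ≤ η * Nm x :=
                  mul_le_mul_of_nonneg_right ha'.le hNx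
                have h6 : η * Nm x < δ/2 := by
                  rw [hη, mul_comm]
                  exact BSEfrac hδ hNx (by norm_num)
                linarith

end AuxNm

section AuxNm2

variable {𝕂 : Subfield ℝ} {E : Type} [AddCommGroup E] [Module 𝕂 E]
variable {Nm : E → ℝ}

lemma BSEnet' (hN0 : ∀ x : E, Nm x = 0 ↔ x = 0)
    (hNadd : ∀ x y : E, Nm (x + y) ≤ Nm x + Nm y)
    (hNsmul : ∀ (a : 𝕂) (x : E), Nm (a • x) = |(a : ℝ)| * Nm x)
    (s : Finset E) (v : E) (hvs : v ∈ Submodule.span 𝕂 (s : Set E)) (hv : v ≠ 0)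
    {δ : ℝ} (hδ : 0 < δ) :
    ∃ N : Finset E, (∀ w ∈ N, w ∈ Submodule.span 𝕂 (s : Set E) ∧ w ≠ 0) ∧
      ∀ z ∈ Submodule.span 𝕂 (s : Set E), Nm z ≤ 1 → ∃ w ∈ N, Nm (z - w) < δ := by
  classical
  obtain ⟨N₀, hspan, hcov⟩ := BSEnet hN0 hNadd hNsmul s (δ/2) 1 (by positivity)
  have hNv : 0 ≤ Nm v := BSEnm_nonneg hN0 hNadd hNsmul v
  obtain ⟨q, hq0, hqs⟩ := exists_rat_btwn (show (0:ℝ) < δ/(2*(Nm v + 1)) by positivity)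
  set t : 𝕂 := (q : 𝕂) with ht
  have hcast : ((t : 𝕂) : ℝ) = (q : ℝ) := by rw [ht]; push_cast; ring
  have ht0 : t ≠ 0 := by
    intro h
    rw [h] at hcast
    simp only [ZeroMemClass.coe_zero] at hcast
    exact absurd (hcast ▸ hq0) (lt_irrefl _)
  have htv : t • v ≠ 0 := smul_ne_zero ht0 hv
  have htn : Nm (t • v) < δ/2 := by
    rw [hNsmul, hcast, abs_of_pos hq0]
    calc (q:ℝ) * Nm v ≤ (δ/(2*(Nm v + 1))) * Nm v :=
          mul_le_mul_of_nonneg_right hqs.le hNv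
      _ = Nm v * (δ/(2*(Nm v + 1))) := by ring
      _ < δ/2 := BSEfrac hδ hNv (by norm_num)
  refine ⟨(N₀.filter (· ≠ 0)) ∪ {t • v}, ?_, ?_⟩
  · intro w hw
    rcases Finset.mem_union.1 hw with hw | hw
    · obtain ⟨hw1, hw2⟩ := Finset.mem_filter.1 hw
      exact ⟨hspan w hw1, by simpa using hw2⟩
    · rw [Finset.mem_singleton.1 hw]
      exact ⟨Submodule.smul_mem _ _ hvs, htv⟩
  · intro z hz hz1
    obtain ⟨w, hwN, hw⟩ := hcov z hz hz1
    by_cases hw0 : w = 0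
    · refine ⟨t • v, Finset.mem_union_right _ (Finset.mem_singleton_self _), ?_⟩
      rw [hw0, sub_zero] at hw
      calc Nm (z - t • v) ≤ Nm z + Nm (t • v) := BSEnm_sub_le hNadd hNsmul _ _
        _ < δ := by linarith
    · refine ⟨w, Finset.mem_union_left _ (Finset.mem_filter.2 ⟨hwN, by simpa using hw0⟩), ?_⟩
      linarith

end AuxNm2

section AuxBound

variable {E : Type} [DecidableEq E]

noncomputable def BSEnetAll (netF : Finset E → ℝ → Finset E) (Δ : ℕ → ℝ) (d : E) (l : List E) :
    Finset E :=
  (Finset.range l.length).powerset.biUnion fun S =>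
    (Finset.range l.length).biUnion fun t => netF (S.image fun a => l.getD a d) (Δ t)

lemma BSEnetAll_mem {netF : Finset E → ℝ → Finset E} {Δ : ℕ → ℝ} {d : E} {l : List E}
    {S : Finset ℕ} {t : ℕ} {w : E} (hS : S ⊆ Finset.range l.length)
    (ht : t < l.length) (hw : w ∈ netF (S.image fun a => l.getD a d) (Δ t)) :
    w ∈ BSEnetAll netF Δ d l := by
  exact Finset.mem_biUnion.2 ⟨S, Finset.mem_powerset.2 hS,
    Finset.mem_biUnion.2 ⟨t, Finset.mem_range.2 ht, hw⟩⟩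

noncomputable def BSEbound (σ : List E → ℕ) (N : Finset E) (n : ℕ) : ℕ :=
  (Finset.range (n+1)).sup fun m =>
    (Fintype.piFinset fun _ : Fin m => N).sup fun f => σ (List.ofFn f)

lemma BSEbound_spec (σ : List E → ℕ) (N : Finset E) (n : ℕ) {i : ℕ} (hi : i ≤ n)
    (f : Fin i → E) (hf : ∀ t, f t ∈ N) : σ (List.ofFn f) ≤ BSEbound σ N n := by
  have h1 : σ (List.ofFn f) ≤ (Fintype.piFinset fun _ : Fin i => N).sup
      fun f => σ (List.ofFn f) :=
    Finset.le_sup (f := fun f : Fin i → E => σ (List.ofFn f)) (Fintype.mem_piFinset.2 hf)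
  have h2 : ((Fintype.piFinset fun _ : Fin i => N).sup fun f => σ (List.ofFn f)) ≤
      BSEbound σ N n :=
    Finset.le_sup
      (f := fun m => (Fintype.piFinset fun _ : Fin m => N).sup fun f => σ (List.ofFn f))
      (Finset.mem_range.2 (Nat.lt_succ_of_le hi))
  exact le_trans h1 h2

end AuxBound

section AuxList

lemma BSEfoldr_max (l : List ℕ) : ∀ j ∈ l, j ≤ l.foldr max 0 := by
  induction l with
  | nil => intro j hj; simp at hj
  | cons a l ih =>
      intro j hj
      rcases List.mem_cons.1 hj with rfl | hj
      · exact le_max_left _ _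
      · exact le_trans (ih j hj) (le_max_right _ _)

lemma BSEhist_length {α : Type _} (x : ℕ → α) (n : ℕ) :
    (List.ofFn (fun j : Fin n => x j)).length = n := by simp

lemma BSEhist_getD {α : Type _} (x : ℕ → α) (d : α) {a n : ℕ} (h : a < n) :
    (List.ofFn (fun j : Fin n => x j)).getD a d = x a := by
  have hlen : a < (List.ofFn (fun j : Fin n => x j)).length := by simpa using h
  rw [List.getD_eq_getElem _ _ hlen, List.getElem_ofFn]

end AuxList

set_option maxHeartbeats 1000000 in
set_option synthInstance.maxHeartbeats 1000000 in
theorem blockSeqIn_subset_expand_of_IWinsF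
    (𝕂 : Subfield ℝ) [Countable 𝕂]
    {E : Type} [AddCommGroup E] [Module 𝕂 E]
    (b : Module.Basis ℕ 𝕂 E) (Nm : E → ℝ)
    (hN0 : ∀ x : E, Nm x = 0 ↔ x = 0)
    (hNadd : ∀ x y : E, Nm (x + y) ≤ Nm x + Nm y)
    (hNsmul : ∀ (a : 𝕂) (x : E), Nm (a • x) = |(a : ℝ)| * Nm x)
    (hNval : ∀ x : E, Nm x ∈ 𝕂)
    (X : Submodule 𝕂 E) (hX : IsBlockSubspace b X)
    (B : Set (ℕ → E)) (hB : IWinsF b X [] B)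
    (Δ : ℕ → ℝ) (hΔ : ∀ i, 0 < Δ i) :
    ∃ Y : Submodule 𝕂 E, IsBlockSubspace b Y ∧ Y ≤ X ∧
      BlockSeqIn b Nm Y ⊆ Expand Nm Δ B := by
  classical
  obtain ⟨u, hu, hXeq⟩ := hX
  obtain ⟨σ, hσ⟩ := hB
  have hnetF0 : ∀ (s : Finset E) (δ' : ℝ), ∃ N : Finset E,
      ((0 < δ' ∧ ∃ v ∈ Submodule.span 𝕂 (s : Set E), v ≠ 0) →
       ((∀ w ∈ N, w ∈ Submodule.span 𝕂 (s : Set E) ∧ w ≠ 0) ∧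
        ∀ z' ∈ Submodule.span 𝕂 (s : Set E), Nm z' ≤ 1 → ∃ w ∈ N, Nm (z' - w) < δ')) := by
    intro s δ'
    by_cases h : 0 < δ' ∧ ∃ v ∈ Submodule.span 𝕂 (s : Set E), v ≠ 0
    · obtain ⟨hδ', v, hvs, hv⟩ := h
      obtain ⟨N, h1, h2⟩ := BSEnet' hN0 hNadd hNsmul s v hvs hv hδ'
      exact ⟨N, fun _ => ⟨h1, h2⟩⟩
    · exact ⟨∅, fun hh => absurd hh h⟩
  choose netF hnetF using hnetF0
  let Bnd : List E → ℕ := fun l => BSEbound σ (BSEnetAll netF Δ 0 l) l.length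
  have hune : ∀ K, (supp b (u K)).Nonempty := fun K => BSEsupp_ne b (hu.1 K)
  have humin : ∀ K, ∀ p ∈ supp b (u K), K ≤ p := by
    have hmono : StrictMono (fun K => (supp b (u K)).min' (hune K)) :=
      strictMono_nat_of_lt_succ (fun K =>
        hu.2 K _ (Finset.min'_mem _ _) _ (Finset.min'_mem _ _))
    intro K p hp
    exact le_trans hmono.le_apply (Finset.min'_le _ _ hp)
  have hstep : ∀ l : List ℕ, ∃ K, (∀ j ∈ l, j < K) ∧ NatLt b (Bnd (l.map u)) (u K) := by
    intro l
    refine ⟨Bnd (l.map u) + l.foldr max 0 + 1, ?_, ?_⟩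
    · intro j hj
      have := BSEfoldr_max l j hj
      omega
    · intro p hp
      have := humin _ p hp
      omega
  choose pick hpick1 hpick2 using hstep
  let g : ℕ → List ℕ := fun n => Nat.rec [] (fun _ l => l ++ [pick l]) n
  have hgsucc : ∀ n, g (n+1) = g n ++ [pick (g n)] := fun n => rfl
  let k : ℕ → ℕ := fun n => pick (g n)
  let y : ℕ → E := fun n => u (k n)
  have hgofn : ∀ n, g n = List.ofFn (fun j : Fin n => k j) := by
    intro n
    induction n with
    | zero => rfl
    | succ n ih =>
        rw [hgsucc]
        conv_rhs => rw [List.ofFn_succ']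
        rw [List.concat_eq_append]
        simp only [Fin.coe_castSucc, Fin.val_last]
        rw [← ih]
  have hkmem : ∀ {m n : ℕ}, m < n → k m ∈ g n := by
    intro m n h
    rw [hgofn n]
    exact List.mem_ofFn.2 ⟨⟨m, h⟩, rfl⟩
  have hkmono : ∀ {m n : ℕ}, m < n → k m < k n := fun {m n} h => hpick1 (g n) _ (hkmem h)
  have hy : IsBlockSeq b y :=
    ⟨fun n => hu.1 (k n), fun n => BSEblock_mono b hu (hkmono (Nat.lt_succ_self n))⟩
  have hhist : ∀ n, hist y n = (g n).map u := by
    intro n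
    rw [hgofn n, List.map_ofFn]
    rfl
  have hgap : ∀ n, NatLt b (Bnd (hist y n)) (y n) := by
    intro n
    rw [hhist n]
    exact hpick2 (g n)
  have hYle : Submodule.span 𝕂 (Set.range y) ≤ X := by
    rw [hXeq]
    refine Submodule.span_le.2 (fun v hv => ?_)
    obtain ⟨n, rfl⟩ := hv
    exact Submodule.subset_span ⟨k n, rfl⟩
  refine ⟨Submodule.span 𝕂 (Set.range y), ⟨y, hy, rfl⟩, hYle, ?_⟩
  rintro z ⟨⟨hz0, hzlt⟩, hzm⟩
  have hzsp : ∀ i, z i ∈ Submodule.span 𝕂 (Set.range y) := fun i => (hzm i).1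
  have hcex := fun i => Finsupp.mem_span_range_iff_exists_finsupp.1 (hzsp i)
  choose c hc using hcex
  let S : ℕ → Finset ℕ := fun i => (c i).support
  have hydisj : ∀ {j j' : ℕ}, j ≠ j' → ∀ p ∈ supp b (y j), p ∉ supp b (y j') := by
    intro j j' hne p hp hp'
    rcases lt_or_gt_of_ne hne with h | h
    · exact lt_irrefl p (BSEblock_mono b hy h p hp p hp')
    · exact lt_irrefl p (BSEblock_mono b hy h p hp' p hp)
  have hzi : ∀ i, z i = ∑ j ∈ S i, (c i) j • y j := by
    intro i
    rw [← hc i]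
    rfl
  have hsub : ∀ i, ∀ j ∈ S i, ∀ p ∈ supp b (y j), p ∈ supp b (z i) := by
    intro i j hj p hp
    have hrepr : b.repr (z i) = ∑ j' ∈ S i, (c i) j' • b.repr (y j') := by
      rw [hzi i, map_sum]
      simp only [map_smul]
    have happ : (b.repr (z i)) p = ∑ j' ∈ S i, (c i) j' * (b.repr (y j')) p := by
      rw [hrepr, Finsupp.finset_sum_apply]
      simp only [Finsupp.smul_apply, smul_eq_mul]
    have hsingle : ∑ j' ∈ S i, (c i) j' * (b.repr (y j')) p
        = (c i) j * (b.repr (y j)) p := by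
      refine Finset.sum_eq_single_of_mem j hj (fun j' hj' hne => ?_)
      have hnot : p ∉ supp b (y j') := hydisj (Ne.symm hne) p hp
      rw [Finsupp.notMem_support_iff.1 hnot, mul_zero]
    have hne0 : (b.repr (z i)) p ≠ 0 := by
      rw [happ, hsingle]
      exact mul_ne_zero (Finsupp.mem_support_iff.1 hj) (Finsupp.mem_support_iff.1 hp)
    exact Finsupp.mem_support_iff.2 hne0
  have hSne : ∀ i, (S i).Nonempty := by
    intro i
    rw [Finset.nonempty_iff_ne_empty]
    intro h
    apply hz0 i
    rw [← hc i]
    have hc0 : c i = 0 := Finsupp.support_eq_empty.1 h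
    rw [hc0]
    simp
  have hSlt : ∀ i, ∀ j ∈ S i, ∀ j' ∈ S (i+1), j < j' := by
    intro i j hj j' hj'
    by_contra hle
    push_neg at hle
    obtain ⟨p, hp⟩ := BSEsupp_ne b (hy.1 j)
    obtain ⟨q, hq⟩ := BSEsupp_ne b (hy.1 j')
    have hpz : p ∈ supp b (z i) := hsub i j hj p hp
    have hqz : q ∈ supp b (z (i+1)) := hsub (i+1) j' hj' q hq
    have hpq : p < q := hzlt i p hpz q hqz
    rcases eq_or_lt_of_le hle with heq | hlt
    · subst heq
      exact lt_irrefl q (hzlt i q (hsub i j' hj q hq) q hqz)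
    · exact lt_irrefl _ (lt_trans hpq (BSEblock_mono b hy hlt q hq p hp))
  have hSmono : ∀ t i, t < i → ∀ a ∈ S t, ∀ a' ∈ S i, a < a' := by
    intro t i hti
    induction i, hti using Nat.le_induction with
    | base => exact hSlt t
    | succ i hti ih =>
        intro a ha a' ha'
        obtain ⟨a'', ha''⟩ := hSne i
        exact lt_trans (ih a ha a'' ha'') (hSlt i a'' ha'' a' ha')
  have hSmin : ∀ i, ∀ j ∈ S i, i ≤ j := by
    intro i
    induction i with
    | zero => exact fun j _ => Nat.zero_le j
    | succ i ih =>
        intro j hj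
        obtain ⟨a, ha⟩ := hSne i
        exact Nat.succ_le_of_lt (lt_of_le_of_lt (ih a ha) (hSlt i a ha j hj))
  have hzspan : ∀ i, z i ∈ Submodule.span 𝕂 (((S i).image y : Finset E) : Set E) := by
    intro i
    rw [hzi i]
    refine Submodule.sum_mem _ (fun j hj => ?_)
    refine Submodule.smul_mem _ _ (Submodule.subset_span ?_)
    simp only [Finset.coe_image, Set.mem_image, Finset.mem_coe]
    exact ⟨j, hj, rfl⟩
  have hnetspec : ∀ i, (∀ w ∈ netF ((S i).image y) (Δ i),
        w ∈ Submodule.span 𝕂 (((S i).image y : Finset E) : Set E) ∧ w ≠ 0) ∧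
      ∀ z' ∈ Submodule.span 𝕂 (((S i).image y : Finset E) : Set E), Nm z' ≤ 1 →
        ∃ w ∈ netF ((S i).image y) (Δ i), Nm (z' - w) < Δ i := by
    intro i
    apply hnetF
    obtain ⟨j, hj⟩ := hSne i
    refine ⟨hΔ i, y j, Submodule.subset_span ?_, hy.1 j⟩
    simp only [Finset.coe_image, Set.mem_image, Finset.mem_coe]
    exact ⟨j, hj, rfl⟩
  have hwex : ∀ i, ∃ w ∈ netF ((S i).image y) (Δ i), Nm (z i - w) < Δ i :=
    fun i => (hnetspec i).2 (z i) (hzspan i) (hzm i).2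
  choose w hwmem hwnm using hwex
  have hwspan : ∀ i, w i ∈ Submodule.span 𝕂 (((S i).image y : Finset E) : Set E) :=
    fun i => ((hnetspec i).1 (w i) (hwmem i)).1
  have hwne : ∀ i, w i ≠ 0 := fun i => ((hnetspec i).1 (w i) (hwmem i)).2
  have hwsupp : ∀ i, ∀ p ∈ supp b (w i), ∃ j ∈ S i, p ∈ supp b (y j) := by
    intro i p hp
    obtain ⟨v, hv, hpv⟩ := BSEsupp_subset b (hwspan i) p hp
    simp only [Finset.coe_image, Set.mem_image, Finset.mem_coe] at hv
    obtain ⟨j, hj, rfl⟩ := hv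
    exact ⟨j, hj, hpv⟩
  have hwX : ∀ i, w i ∈ X := by
    intro i
    have h1 : (((S i).image y : Finset E) : Set E) ⊆ Set.range y := by
      intro v hv
      simp only [Finset.coe_image, Set.mem_image, Finset.mem_coe] at hv
      obtain ⟨j, _, rfl⟩ := hv
      exact ⟨j, rfl⟩
    exact hYle ((Submodule.span_mono h1) (hwspan i))
  have hwlt : ∀ i, VecLt b (w i) (w (i+1)) := by
    intro i p hp q hq
    obtain ⟨j, hj, hpj⟩ := hwsupp i p hp
    obtain ⟨j', hj', hqj'⟩ := hwsupp (i+1) q hq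
    exact BSEblock_mono b hy (hSlt i j hj j' hj') p hpj q hqj'
  have hwnat : ∀ i, NatLt b (σ (hist w i)) (w i) := by
    intro i p hp
    obtain ⟨j, hj, hpj⟩ := hwsupp i p hp
    have hij : i ≤ j := hSmin i j hj
    have hlen : (hist y j).length = j := by simp [hist]
    have hσle : σ (hist w i) ≤ Bnd (hist y j) := by
      have key : σ (List.ofFn (fun t : Fin i => w t)) ≤
          BSEbound σ (BSEnetAll netF Δ 0 (hist y j)) ((hist y j).length) := by
        refine BSEbound_spec _ _ _ (by rw [hlen]; exact hij) _ (fun t => ?_)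
        refine BSEnetAll_mem (S := S t) (t := (t : ℕ)) ?_ ?_ ?_
        · intro a ha
          rw [hlen, Finset.mem_range]
          exact hSmono t i t.isLt a ha j hj
        · rw [hlen]
          exact lt_of_lt_of_le t.isLt hij
        · have himg : (S (t : ℕ)).image (fun a => (hist y j).getD a 0)
              = (S (t : ℕ)).image y := by
            refine Finset.image_congr (fun a ha => ?_)
            have haj : a < j := hSmono t i t.isLt a ha j hj
            have : (List.ofFn (fun j' : Fin j => y j')).getD a 0 = y a :=
              BSEhist_getD y 0 haj
            exact this
          rw [himg]
          exact hwmem t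
      exact key
    exact lt_of_le_of_lt hσle (hgap j p hpj)
  have hyps : ∀ i, w i ∈ X ∧ w i ≠ 0 ∧ NatLt b (σ (hist w i)) (w i) ∧
      VecLt b (w i) (w (i+1)) := fun i => ⟨hwX i, hwne i, hwnat i, hwlt i⟩
  obtain ⟨-, hBmem⟩ := hσ w hyps
  have hpc : prefCat ([] : List E) w = w := by
    funext n
    simp [prefCat]
  rw [hpc] at hBmem
  refine ⟨w, hBmem, fun i => ?_⟩
  calc Nm (w i - z i) = Nm (-(z i - w i)) := by rw [neg_sub]
    _ = Nm (z i - w i) := BSEnm_neg hNsmul _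
    _ < Δ i := hwnm i
end
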